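/- arXiv:math/0610703 — 3 statements merged into one kernel-verified Lean document; each statement's English description precedes it below -/
import Mathlib

section
/- Let 𝒢 be a Lie group modeled on a finite-dimensional real vector space, let H be a second-countable Lie group, and let ι : H → 𝒢 be an injective smooth group homomorphism which is an immersion (the differential of ι at every point of H is injective), so that the range ι(H) is a not necessarily closed Lie subgroup of 𝒢. Let J ⊆ ℝ be an interval and λ : J → 𝒢 a continuous curve. If λ⁻¹(ι(H)) is open in J and nonempty, then λ(J) ⊆ ι(H). -/
open scoped Manifold
open Set Filter Topology


theorem aux_sub {E : Type*} [NormedAddCommGroup E]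
    {s : Set E} (hs : IsPreconnected s) (hc : s.Countable) : s.Subsingleton := by
  intro x hx y hy
  by_contra hxy
  have hcont : ContinuousOn (fun e => ‖e - x‖) s :=
    (continuous_norm.comp (continuous_id.sub continuous_const)).continuousOn
  have himg : IsPreconnected ((fun e => ‖e - x‖) '' s) := hs.image _ hcont
  have h0 : (0 : ℝ) ∈ (fun e => ‖e - x‖) '' s := ⟨x, hx, by simp⟩
  have hr : ‖y - x‖ ∈ (fun e => ‖e - x‖) '' s := ⟨y, hy, rfl⟩
  have hrpos : 0 < ‖y - x‖ := by
    rw [norm_pos_iff, sub_ne_zero]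
    exact fun h => hxy h.symm
  have hIcc : Icc (0:ℝ) ‖y - x‖ ⊆ (fun e => ‖e - x‖) '' s := himg.ordConnected.out h0 hr
  have hcnt : (Icc (0:ℝ) ‖y - x‖).Countable := (hc.image _).mono hIcc
  have := hcnt.le_aleph0
  rw [Cardinal.mk_Icc_real hrpos] at this
  exact absurd this (not_le.mpr Cardinal.aleph0_lt_continuum)

theorem segment_lemma
    {E : Type*} [NormedAddCommGroup E] [NormedSpace ℝ E] [FiniteDimensional ℝ E]
    {G : Type*} [TopologicalSpace G] [ChartedSpace E G] [Group G]
    [LieGroup 𝓘(ℝ, E) (⊤ : ℕ∞) G]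
    {H : Type*} [Group H]
    (ι : H →* G)
    (V : Set G) (hVo : IsOpen V) (hV1 : (1:G) ∈ V) (π : G → E) (hπc : ContinuousOn π V)
    (hπcnt : (π '' (V ∩ Set.range ι)).Countable)
    (hslice : ∀ g ∈ V, π g = π 1 → g ∈ Set.range ι)
    {lam : ℝ → G} {a b : ℝ} (hab : a < b) (hcont : ContinuousOn lam (Set.Icc a b))
    (hK : ∀ t ∈ Set.Ico a b, lam t ∈ Set.range ι) : lam b ∈ Set.range ι := by
  haveI : IsTopologicalGroup G := topologicalGroup_of_lieGroup 𝓘(ℝ, E) (⊤ : ℕ∞)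
  set Q : ℝ × ℝ → G := fun q => (lam q.1)⁻¹ * lam q.2 with hQ
  have hQc : ContinuousOn Q (Set.Icc a b ×ˢ Set.Icc a b) := by
    apply ContinuousOn.mul
    · exact (hcont.comp continuous_fst.continuousOn (fun q hq => hq.1)).inv
    · exact hcont.comp continuous_snd.continuousOn (fun q hq => hq.2)
  have hQbb : Q (b, b) = 1 := inv_mul_cancel _
  have hbbmem : ((b,b) : ℝ × ℝ) ∈ Set.Icc a b ×ˢ Set.Icc a b :=
    ⟨⟨hab.le, le_rfl⟩, hab.le, le_rfl⟩
  have hpre : Q ⁻¹' V ∈ nhdsWithin (b,b) (Set.Icc a b ×ˢ Set.Icc a b) := by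
    apply hQc (b,b) hbbmem
    rw [hQbb]
    exact hVo.mem_nhds hV1
  obtain ⟨δ, hδ, hball⟩ := Metric.mem_nhdsWithin_iff.mp hpre
  set s := max a (b - δ/2) with hs
  have hsge : b - δ/2 ≤ s := le_max_right _ _
  have hsab : s ∈ Set.Ico a b := ⟨le_max_left _ _, max_lt hab (by linarith)⟩
  have hsb : s < b := hsab.2
  have hQV : ∀ t ∈ Set.Icc s b, Q (s, t) ∈ V := by
    intro t ht
    apply hball
    constructor
    · rw [Metric.mem_ball, Prod.dist_eq]
      apply max_lt
      · rw [Real.dist_eq, abs_sub_comm, abs_of_nonneg (by linarith)]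
        linarith
      · rw [Real.dist_eq, abs_sub_comm, abs_of_nonneg (by linarith [ht.2])]
        have := ht.1
        linarith
    · exact ⟨⟨hsab.1, hsb.le⟩, ⟨le_trans hsab.1 ht.1, ht.2⟩⟩
  set ρ : ℝ → E := fun t => π (Q (s, t)) with hρ
  have hρc : ContinuousOn ρ (Set.Icc s b) := by
    apply hπc.comp
    · exact hQc.comp (continuous_const.prodMk continuous_id).continuousOn
        (fun t ht => ⟨⟨hsab.1, hsb.le⟩, ⟨le_trans hsab.1 ht.1, ht.2⟩⟩)
    · exact hQV
  have hQK : ∀ t ∈ Set.Ico s b, Q (s, t) ∈ Set.range ι := by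
    intro t ht
    obtain ⟨u, hu⟩ := hK s hsab
    obtain ⟨v, hv⟩ := hK t ⟨le_trans hsab.1 ht.1, ht.2⟩
    exact ⟨u⁻¹ * v, by rw [_root_.map_mul, _root_.map_inv, hu, hv]⟩
  have himgsub : ρ '' (Set.Ico s b) ⊆ π '' (V ∩ Set.range ι) := by
    rintro _ ⟨t, ht, rfl⟩
    exact ⟨Q (s,t), ⟨hQV t (Set.Ico_subset_Icc_self ht), hQK t ht⟩, rfl⟩
  have hconn : IsPreconnected (ρ '' (Set.Ico s b)) :=
    isPreconnected_Ico.image ρ (hρc.mono Set.Ico_subset_Icc_self)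
  have hsub2 : (ρ '' (Set.Ico s b)).Subsingleton := aux_sub hconn (hπcnt.mono himgsub)
  have hρs : ρ s = π 1 := by
    show π (Q (s,s)) = π 1
    rw [show Q (s,s) = 1 from inv_mul_cancel _]
  have hconstt : ∀ t ∈ Set.Ico s b, ρ t = π 1 := by
    intro t ht
    rw [← hρs]
    exact hsub2 ⟨t, ht, rfl⟩ ⟨s, ⟨le_rfl, hsb⟩, rfl⟩
  have hρb : ρ b = π 1 := by
    have hnebot : (nhdsWithin b (Set.Ico s b)).NeBot := by
      rw [← mem_closure_iff_nhdsWithin_neBot, closure_Ico hsb.ne]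
      exact ⟨hsb.le, le_rfl⟩
    have h1 : Filter.Tendsto ρ (nhdsWithin b (Set.Ico s b)) (nhds (ρ b)) :=
      (hρc b ⟨hsb.le, le_rfl⟩).mono_left (nhdsWithin_mono _ Set.Ico_subset_Icc_self)
    have h2 : Filter.Tendsto ρ (nhdsWithin b (Set.Ico s b)) (nhds (π 1)) :=
      Filter.Tendsto.congr'
        (by filter_upwards [self_mem_nhdsWithin] with t ht; exact (hconstt t ht).symm)
        tendsto_const_nhds
    exact tendsto_nhds_unique h1 h2
  obtain ⟨w, hw⟩ := hslice (Q (s,b)) (hQV b ⟨hsb.le, le_rfl⟩) hρb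
  obtain ⟨u, hu⟩ := hK s hsab
  refine ⟨u * w, ?_⟩
  rw [_root_.map_mul, hu, hw]
  show lam s * ((lam s)⁻¹ * lam b) = lam b
  rw [mul_inv_cancel_left]


theorem local_structure
    {E : Type*} [NormedAddCommGroup E] [NormedSpace ℝ E] [FiniteDimensional ℝ E]
    {G : Type*} [TopologicalSpace G] [ChartedSpace E G] [Group G]
    [LieGroup 𝓘(ℝ, E) (⊤ : ℕ∞) G]
    {E' : Type*} [NormedAddCommGroup E'] [NormedSpace ℝ E'] [FiniteDimensional ℝ E']
    {H : Type*} [TopologicalSpace H] [ChartedSpace E' H] [Group H]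
    [LieGroup 𝓘(ℝ, E') (⊤ : ℕ∞) H] [SecondCountableTopology H]
    (ι : H →* G) (hι_smooth : ContMDiff 𝓘(ℝ, E') 𝓘(ℝ, E) (⊤ : ℕ∞) ι)
    (hι_imm : Function.Injective (mfderiv 𝓘(ℝ, E') 𝓘(ℝ, E) ι 1)) :
    ∃ V : Set G, IsOpen V ∧ (1 : G) ∈ V ∧ ∃ π : G → E, ContinuousOn π V ∧
      (π '' (V ∩ Set.range ι)).Countable ∧ ∀ g ∈ V, π g = π 1 → g ∈ Set.range ι := by
  classical
  haveI : IsTopologicalGroup G := topologicalGroup_of_lieGroup 𝓘(ℝ, E) (⊤ : ℕ∞)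
  haveI : IsTopologicalGroup H := topologicalGroup_of_lieGroup 𝓘(ℝ, E') (⊤ : ℕ∞)
  set eG := extChartAt 𝓘(ℝ, E) (1 : G) with heG
  set eH := extChartAt 𝓘(ℝ, E') (1 : H) with heH
  have h1G : (1:G) ∈ eG.source := mem_extChartAt_source 1
  have h1H : (1:H) ∈ eH.source := mem_extChartAt_source 1
  have hmd : MDifferentiableAt 𝓘(ℝ, E') 𝓘(ℝ, E) ι 1 := hι_smooth.mdifferentiableAt (by simp)
  set A : E' →L[ℝ] E := mfderiv 𝓘(ℝ, E') 𝓘(ℝ, E) ι 1 with hA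
  have hAinj : Function.Injective A := hι_imm
  have hA_fun : HasFDerivAt (fun x => eG (ι (eH.symm x))) A (eH 1) := by
    have h1 := hmd.differentiableWithinAt_writtenInExtChartAt
    have h2 := hmd.mfderiv
    simp only [modelWithCornersSelf_coe, Set.range_id, differentiableWithinAt_univ,
      fderivWithin_univ] at h1 h2
    have h3 := h1.hasFDerivAt
    rw [← h2] at h3
    have : writtenInExtChartAt 𝓘(ℝ, E') 𝓘(ℝ, E) (1:H) ι = fun x => eG (ι (eH.symm x)) := by
      funext x
      simp only [writtenInExtChartAt, Function.comp_apply, _root_.map_one, heG, heH]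
    rw [this] at h3
    exact h3
  -- complement
  obtain ⟨m, hcompl⟩ := Submodule.exists_isCompl (LinearMap.range (A : E' →ₗ[ℝ] E))
  set L : (E' × ↥m) ≃L[ℝ] E :=
    (((LinearEquiv.ofInjective (A : E' →ₗ[ℝ] E) hAinj).prodCongr
      (LinearEquiv.refl ℝ ↥m)).trans
      (Submodule.prodEquivOfIsCompl _ m hcompl)).toContinuousLinearEquiv with hL
  have hLapply : ∀ p : E' × ↥m, L p = A p.1 + (p.2 : E) := fun p => rfl
  -- the local chart map
  set Ψ : E' × ↥m → G := fun p => eG.symm (eG 1 + (p.2 : E)) * ι (eH.symm p.1) with hΨ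
  set Fh : E' × ↥m → E := fun p => eG (Ψ p) with hFh
  set p₀ : E' × ↥m := (eH 1, 0) with hp₀
  have hΨp₀ : Ψ p₀ = 1 := by
    simp only [hΨ, hp₀, ZeroMemClass.coe_zero, add_zero]
    rw [eG.left_inv h1G, eH.left_inv h1H, one_mul, _root_.map_one]
  -- smoothness of Fh
  have hσ_lin : ContMDiffAt 𝓘(ℝ, E' × ↥m) 𝓘(ℝ, E) (⊤ : ℕ∞) (fun p : E' × ↥m => eG 1 + (p.2:E)) p₀ :=
    ContDiffAt.contMDiffAt
      ((contDiff_const.add ((m.subtypeL.comp (ContinuousLinearMap.snd ℝ E' ↥m)).contDiff)).contDiffAt)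
  have hsymmG : ContMDiffAt 𝓘(ℝ, E) 𝓘(ℝ, E) (⊤ : ℕ∞) eG.symm (eG 1 + ((0:↥m):E)) := by
    have h : eG 1 + ((0:↥m):E) = eG 1 := by simp
    rw [h]
    exact (contMDiffOn_extChartAt_symm (1:G)).contMDiffAt
      ((isOpen_extChartAt_target (1:G)).mem_nhds (mem_extChartAt_target 1))
  have hσm : ContMDiffAt 𝓘(ℝ, E' × ↥m) 𝓘(ℝ, E) (⊤ : ℕ∞)
      (fun p : E' × ↥m => eG.symm (eG 1 + (p.2:E))) p₀ := hsymmG.comp p₀ hσ_lin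
  have hfst : ContMDiffAt 𝓘(ℝ, E' × ↥m) 𝓘(ℝ, E') (⊤ : ℕ∞) (fun p : E' × ↥m => p.1) p₀ :=
    ContDiffAt.contMDiffAt (contDiff_fst.contDiffAt)
  have hsymmH : ContMDiffAt 𝓘(ℝ, E') 𝓘(ℝ, E') (⊤ : ℕ∞) eH.symm (eH 1) :=
    (contMDiffOn_extChartAt_symm (1:H)).contMDiffAt
      ((isOpen_extChartAt_target (1:H)).mem_nhds (mem_extChartAt_target 1))
  have hιm : ContMDiffAt 𝓘(ℝ, E' × ↥m) 𝓘(ℝ, E) (⊤ : ℕ∞)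
      (fun p : E' × ↥m => ι (eH.symm p.1)) p₀ :=
    ((hι_smooth.contMDiffAt).comp (eH 1) hsymmH).comp (f := fun p : E' × ↥m => p.1) p₀ hfst
  have hmul : ContMDiffAt 𝓘(ℝ, E' × ↥m) 𝓘(ℝ, E) (⊤ : ℕ∞) Ψ p₀ := hσm.mul hιm
  have hFsm : ContMDiffAt 𝓘(ℝ, E' × ↥m) 𝓘(ℝ, E) (⊤ : ℕ∞) Fh p₀ := by
    refine ContMDiffAt.comp (I' := 𝓘(ℝ, E)) p₀ ?_ hmul
    rw [hΨp₀]
    exact contMDiffAt_extChartAt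

  have hcd := hFsm.contDiffAt
  -- total derivative of Fh at p₀ is L
  have hdiff : DifferentiableAt ℝ Fh p₀ := hcd.differentiableAt (by simp)
  have hTd : HasFDerivAt Fh (fderiv ℝ Fh p₀) p₀ := hdiff.hasFDerivAt
  set T := fderiv ℝ Fh p₀ with hT
  have hinl : HasFDerivAt (fun x : E' => ((x, (0:↥m)) : E' × ↥m))
      (ContinuousLinearMap.inl ℝ E' ↥m) (eH 1) := (ContinuousLinearMap.inl ℝ E' ↥m).hasFDerivAt
  have hcompL : HasFDerivAt (fun x : E' => Fh (x, 0))
      (T.comp (ContinuousLinearMap.inl ℝ E' ↥m)) (eH 1) :=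
    HasFDerivAt.comp (g := Fh) (f := fun x : E' => ((x, (0:↥m)) : E' × ↥m)) (eH 1) hTd hinl
  have hFleft : (fun x : E' => Fh (x, 0)) = fun x => eG (ι (eH.symm x)) := by
    funext x
    simp only [hFh, hΨ, ZeroMemClass.coe_zero, add_zero]
    rw [eG.left_inv h1G, one_mul]
  rw [hFleft] at hcompL
  have hTl : T.comp (ContinuousLinearMap.inl ℝ E' ↥m) = A := hcompL.unique hA_fun
  set R : ↥m →L[ℝ] E' × ↥m := ((0 : ↥m →L[ℝ] E')).prod (ContinuousLinearMap.id ℝ ↥m) with hR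
  have hinr : HasFDerivAt (fun x : ↥m => ((eH 1, x) : E' × ↥m)) R 0 :=
    (hasFDerivAt_const (eH 1) 0).prodMk (hasFDerivAt_id 0)
  have hcompR : HasFDerivAt (fun x : ↥m => Fh (eH 1, x)) (T.comp R) 0 :=
    HasFDerivAt.comp (g := Fh) (f := fun x : ↥m => ((eH 1, x) : E' × ↥m)) 0 hTd hinr
  have hFright : (fun x : ↥m => Fh (eH 1, x)) =ᶠ[nhds (0:↥m)] fun x => eG 1 + (x : E) := by
    have hev : ∀ᶠ x : ↥m in nhds 0, eG 1 + (x:E) ∈ eG.target := by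
      have hcont : Continuous fun x : ↥m => eG 1 + (x:E) :=
        continuous_const.add continuous_subtype_val
      have h0 : eG 1 + ((0:↥m):E) ∈ eG.target := by
        rw [ZeroMemClass.coe_zero, add_zero]
        exact mem_extChartAt_target 1
      exact hcont.continuousAt.preimage_mem_nhds
        ((isOpen_extChartAt_target (1:G)).mem_nhds h0)
    filter_upwards [hev] with x hx
    simp only [hFh, hΨ]
    rw [eH.left_inv h1H, _root_.map_one, mul_one, eG.right_inv hx]
  have hconst : HasFDerivAt (fun x : ↥m => eG 1 + (x:E)) m.subtypeL 0 :=
    (m.subtypeL.hasFDerivAt).const_add (eG 1)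
  have hcompR2 : HasFDerivAt (fun x : ↥m => eG 1 + (x : E)) (T.comp R) 0 :=
    hcompR.congr_of_eventuallyEq hFright.symm
  have hTr : T.comp R = m.subtypeL := hcompR2.unique hconst
  have hTL : T = (L : (E' × ↥m) →L[ℝ] E) := by
    apply ContinuousLinearMap.ext
    intro p
    have hsplit : p = (p.1, (0:↥m)) + ((0:E'), p.2) := by
      ext <;> simp
    rw [ContinuousLinearEquiv.coe_coe, hLapply p, hsplit, map_add]
    have e1 : T (p.1, (0:↥m)) = A p.1 := by
      have := congrArg (fun (f : E' →L[ℝ] E) => f p.1) hTl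
      simpa using this
    have e2 : T ((0:E'), p.2) = (p.2 : E) := by
      have := congrArg (fun (f : ↥m →L[ℝ] E) => f p.2) hTr
      simpa [hR] using this
    rw [e1, e2]
    simp
  have hstrict : HasStrictFDerivAt Fh (L : (E' × ↥m) →L[ℝ] E) p₀ :=
    hcd.hasStrictFDerivAt' (hTL ▸ hTd) (by simp)

  haveI : CompleteSpace (E' × ↥m) := FiniteDimensional.complete ℝ _
  set PHI := hstrict.toOpenPartialHomeomorph Fh with hPHI
  have hPHIcoe : ⇑PHI = Fh := hstrict.toOpenPartialHomeomorph_coe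
  have hp0src : p₀ ∈ PHI.source := hstrict.mem_toOpenPartialHomeomorph_source
  -- open region where all side conditions hold
  set O₁ : Set (E' × ↥m) := {p | eG 1 + (p.2:E) ∈ eG.target} with hO₁
  have hO₁o : IsOpen O₁ := (isOpen_extChartAt_target (1:G)).preimage
    (continuous_const.add (continuous_subtype_val.comp continuous_snd))
  set O₂ : Set (E' × ↥m) := {p | p.1 ∈ eH.target} with hO₂
  have hO₂o : IsOpen O₂ := (isOpen_extChartAt_target (1:H)).preimage continuous_fst
  have hΨc : ContinuousOn Ψ (O₁ ∩ O₂) := by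
    apply ContinuousOn.mul
    · exact (continuousOn_extChartAt_symm (1:G)).comp
        ((continuous_const.add (continuous_subtype_val.comp continuous_snd)).continuousOn)
        (fun p hp => hp.1)
    · exact hι_smooth.continuous.comp_continuousOn
        ((continuousOn_extChartAt_symm (1:H)).comp continuous_fst.continuousOn
          (fun p hp => hp.2))
  set O₀ : Set (E' × ↥m) := PHI.source ∩ ((O₁ ∩ O₂) ∩ Ψ ⁻¹' eG.source) with hO₀
  have hO₀o : IsOpen O₀ := PHI.open_source.inter
    (hΨc.isOpen_inter_preimage (hO₁o.inter hO₂o) (isOpen_extChartAt_source (1:G)))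
  have hp₀O₀ : p₀ ∈ O₀ := by
    refine ⟨hp0src, ⟨?_, ?_⟩, ?_⟩
    · show eG 1 + ((0:↥m):E) ∈ eG.target
      rw [ZeroMemClass.coe_zero, add_zero]
      exact mem_extChartAt_target 1
    · exact mem_extChartAt_target (1:H)
    · show Ψ p₀ ∈ eG.source
      rw [hΨp₀]; exact h1G
  obtain ⟨W', M', hW'o, hW'mem, hM'o, hM'mem, hsubO⟩ :=
    mem_nhds_prod_iff'.mp (hO₀o.mem_nhds hp₀O₀ :
      O₀ ∈ nhds ((eH 1, (0:↥m)) : E' × ↥m))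
  set V : Set G := eG.source ∩ eG ⁻¹' (PHI.target ∩ PHI.symm ⁻¹' (W' ×ˢ M')) with hV
  have hOsub : (W' ×ˢ M' : Set (E' × ↥m)) ⊆ O₀ := hsubO
  have hVo : IsOpen V := (continuousOn_extChartAt (1:G)).isOpen_inter_preimage
    (isOpen_extChartAt_source (1:G))
    (PHI.isOpen_inter_preimage_symm (hW'o.prod hM'o))
  have hF₀ : Fh p₀ = eG 1 := by
    simp only [hFh]; rw [hΨp₀]
  have hsymm1 : PHI.symm (eG 1) = p₀ := by
    rw [show eG 1 = PHI p₀ from by rw [hPHIcoe]; exact hF₀.symm, PHI.left_inv hp0src]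
  have h1V : (1:G) ∈ V := by
    refine ⟨h1G, ?_, ?_⟩
    · rw [show eG 1 = PHI p₀ from by rw [hPHIcoe]; exact hF₀.symm]
      exact PHI.map_source hp0src
    · show PHI.symm (eG 1) ∈ W' ×ˢ M'
      rw [hsymm1]; exact ⟨hW'mem, hM'mem⟩
  set π : G → E := fun g => (((PHI.symm (eG g)).2 : ↥m) : E) with hπ
  have hπc : ContinuousOn π V := by
    apply continuous_subtype_val.comp_continuousOn
    apply continuous_snd.comp_continuousOn
    exact PHI.symm.continuousOn.comp
      ((continuousOn_extChartAt (1:G)).mono inter_subset_left)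
      (fun g hg => hg.2.1)
  have hplaque : ∀ g ∈ V, PHI.symm (eG g) ∈ W' ×ˢ M' ∧ g = Ψ (PHI.symm (eG g)) := by
    intro g hg
    obtain ⟨hg1, hg2t, hg2p⟩ := hg
    refine ⟨hg2p, ?_⟩
    have h2 : PHI (PHI.symm (eG g)) = eG g := PHI.right_inv hg2t
    rw [hPHIcoe] at h2
    have hmemO₀ : PHI.symm (eG g) ∈ O₀ := hOsub hg2p
    exact (eG.injOn hmemO₀.2.2 hg1 h2).symm
  have hπ1 : π 1 = 0 := by
    simp only [hπ, hsymm1, hp₀, ZeroMemClass.coe_zero]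
  have hslice : ∀ g ∈ V, π g = π 1 → g ∈ Set.range ι := by
    intro g hg hpg
    rw [hπ1] at hpg
    obtain ⟨hpO, hgΨ⟩ := hplaque g hg
    have hcalc : Ψ (PHI.symm (eG g)) = ι (eH.symm (PHI.symm (eG g)).1) := by
      show eG.symm (eG 1 + ((PHI.symm (eG g)).2 : E)) * ι (eH.symm (PHI.symm (eG g)).1) = _
      rw [show ((PHI.symm (eG g)).2 : E) = 0 from hpg, add_zero, eG.left_inv h1G, one_mul]
    exact ⟨_, (hgΨ.trans hcalc).symm⟩
  -- countability
  have hσK : ∀ g ∈ V ∩ Set.range ι,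
      eG.symm (eG 1 + ((PHI.symm (eG g)).2 : E)) ∈ Set.range ι := by
    rintro g ⟨hgV, y, hy⟩
    obtain ⟨hpO, hgΨ⟩ := hplaque g hgV
    set p := PHI.symm (eG g) with hp
    refine ⟨y * (eH.symm p.1)⁻¹, ?_⟩
    rw [_root_.map_mul, _root_.map_inv, hy, hgΨ]
    show eG.symm (eG 1 + (p.2 : E)) * ι (eH.symm p.1) * (ι (eH.symm p.1))⁻¹ = _
    rw [mul_inv_cancel_right]
  set WH : Set H := eH.source ∩ eH ⁻¹' W' with hWH
  have hWHo : IsOpen WH := (continuousOn_extChartAt (1:H)).isOpen_inter_preimage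
    (isOpen_extChartAt_source (1:H)) hW'o
  have h1WH : (1:H) ∈ WH := ⟨h1H, hW'mem⟩
  set lab : G → ↥m := fun g => (PHI.symm (eG g)).2 with hlab
  set S : Set ↥m := lab '' (V ∩ Set.range ι) with hSdef
  have hM'S : ∀ c ∈ S, c ∈ M' ∧ eG.symm (eG 1 + (c:E)) ∈ Set.range ι := by
    rintro c ⟨g, hg, rfl⟩
    exact ⟨(hplaque g hg.1).1.2, hσK g hg⟩
  set fam : ↥m → Set H := fun c =>
    if h : eG.symm (eG 1 + (c:E)) ∈ Set.range ι then (fun w => h.choose * w) '' WH else ∅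
    with hfam
  have hScnt : S.Countable := by
    apply Set.PairwiseDisjoint.countable_of_isOpen (s := fam)
    · -- pairwise disjoint
      intro c₁ hc₁ c₂ hc₂ hne
      obtain ⟨hc₁M, hc₁K⟩ := hM'S c₁ hc₁
      obtain ⟨hc₂M, hc₂K⟩ := hM'S c₂ hc₂
      show Disjoint (fam c₁) (fam c₂)
      rw [Set.disjoint_left]
      intro x hx₁ hx₂
      simp only [hfam, dif_pos hc₁K] at hx₁
      simp only [hfam, dif_pos hc₂K] at hx₂
      obtain ⟨w₁, hw₁, hxw₁⟩ := hx₁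
      obtain ⟨w₂, hw₂, hxw₂⟩ := hx₂
      have hp₁ : ((eH w₁, c₁) : E' × ↥m) ∈ W' ×ˢ M' := ⟨hw₁.2, hc₁M⟩
      have hp₂ : ((eH w₂, c₂) : E' × ↥m) ∈ W' ×ˢ M' := ⟨hw₂.2, hc₂M⟩
      have hkey : ∀ (w : H) (c : ↥m), w ∈ WH → (h : eG.symm (eG 1 + (c:E)) ∈ Set.range ι) →
          PHI ((eH w, c) : E' × ↥m) = eG (ι (h.choose * w)) := by
        intro w c hw h
        rw [hPHIcoe]
        show eG (eG.symm (eG 1 + (c:E)) * ι (eH.symm (eH w))) = _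
        rw [eH.left_inv hw.1, _root_.map_mul, h.choose_spec]
      have hxw₁' : hc₁K.choose * w₁ = x := hxw₁
      have hxw₂' : hc₂K.choose * w₂ = x := hxw₂
      have heq : PHI ((eH w₁, c₁) : E' × ↥m) = PHI ((eH w₂, c₂) : E' × ↥m) := by
        rw [hkey w₁ c₁ hw₁ hc₁K, hkey w₂ c₂ hw₂ hc₂K, hxw₁', hxw₂']
      have := PHI.injOn (hOsub hp₁).1 (hOsub hp₂).1 heq
      exact hne (congrArg Prod.snd this)
    · -- open
      intro c hc
      obtain ⟨hcM, hcK⟩ := hM'S c hc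
      simp only [hfam, dif_pos hcK]
      exact (Homeomorph.mulLeft hcK.choose).isOpen_image.mpr hWHo
    · -- nonempty
      intro c hc
      obtain ⟨hcM, hcK⟩ := hM'S c hc
      simp only [hfam, dif_pos hcK]
      exact ⟨hcK.choose * 1, 1, h1WH, rfl⟩
  have hπcnt : (π '' (V ∩ Set.range ι)).Countable := by
    have himg : π '' (V ∩ Set.range ι) = Subtype.val '' S := by
      rw [hSdef, Set.image_image]
    rw [himg]
    exact hScnt.image _
  exact ⟨V, hVo, h1V, π, hπc, hπcnt, hslice⟩

/-- Let `𝒢` be a Lie group modeled on a finite-dimensional real vector space,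
`H` a second-countable Lie group, and `ι : H → 𝒢` an injective smooth immersive group
homomorphism (so that `ι(H)` is a not necessarily closed Lie subgroup of `𝒢`). Let `J ⊆ ℝ` be
an interval and `λ : J → 𝒢` a continuous curve. If `λ⁻¹(ι(H))` is open in `J` and nonempty, then
`λ(J) ⊆ ι(H)`. -/
theorem curve_in_lie_subgroup
    {E : Type*} [NormedAddCommGroup E] [NormedSpace ℝ E] [FiniteDimensional ℝ E]
    {G : Type*} [TopologicalSpace G] [ChartedSpace E G] [Group G]
    [LieGroup 𝓘(ℝ, E) (⊤ : ℕ∞) G]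
    {E' : Type*} [NormedAddCommGroup E'] [NormedSpace ℝ E'] [FiniteDimensional ℝ E']
    {H : Type*} [TopologicalSpace H] [ChartedSpace E' H] [Group H]
    [LieGroup 𝓘(ℝ, E') (⊤ : ℕ∞) H] [SecondCountableTopology H]
    (ι : H →* G) (hι_smooth : ContMDiff 𝓘(ℝ, E') 𝓘(ℝ, E) (⊤ : ℕ∞) ι)
    (hι_inj : Function.Injective ι)
    (hι_imm : ∀ h : H, Function.Injective (mfderiv 𝓘(ℝ, E') 𝓘(ℝ, E) ι h))
    (J : Set ℝ) (hJ : J.OrdConnected)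
    (lam : ℝ → G) (hlam : ContinuousOn lam J)
    (hopen : IsOpen (Subtype.val ⁻¹' (lam ⁻¹' Set.range ι) : Set J))
    (hne : (J ∩ lam ⁻¹' Set.range ι).Nonempty) :
    ∀ t ∈ J, lam t ∈ Set.range ι := by
  obtain ⟨t₁, ht₁J, ht₁K⟩ := hne
  obtain ⟨U, hUo, hUeq⟩ := isOpen_induced_iff.mp hopen
  have hUiff : ∀ x ∈ J, (x ∈ U ↔ lam x ∈ Set.range ι) := by
    intro x hx
    have := Set.ext_iff.mp hUeq (⟨x, hx⟩ : J)
    simpa using this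
  obtain ⟨V, hVo, hV1, π, hπc, hπcnt, hslice⟩ := local_structure ι hι_smooth (hι_imm 1)
  intro t htJ
  rcases lt_trichotomy t₁ t with hlt | heq | hgt
  · by_contra hnotK
    set B := {u : ℝ | u ∈ Set.Icc t₁ t ∧ lam u ∉ Set.range ι} with hB
    have hBne : B.Nonempty := ⟨t, ⟨⟨hlt.le, le_rfl⟩, hnotK⟩⟩
    have hIccJ : Set.Icc t₁ t ⊆ J := hJ.out ht₁J htJ
    have hBbdd : BddBelow B := ⟨t₁, fun u hu => hu.1.1⟩
    have hBclosed : IsClosed B := by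
      have hBeq : B = Set.Icc t₁ t ∩ Uᶜ := by
        ext u
        constructor
        · rintro ⟨hu1, hu2⟩
          exact ⟨hu1, fun hU' => hu2 ((hUiff u (hIccJ hu1)).mp hU')⟩
        · rintro ⟨hu1, hu2⟩
          exact ⟨hu1, fun hK' => hu2 ((hUiff u (hIccJ hu1)).mpr hK')⟩
      rw [hBeq]
      exact isClosed_Icc.inter hUo.isClosed_compl
    set d := sInf B with hd
    have hdB : d ∈ B := hBclosed.csInf_mem hBne hBbdd
    have hdIcc : d ∈ Set.Icc t₁ t := hdB.1
    have ht₁d : t₁ < d := lt_of_le_of_ne hdIcc.1 (fun hEq => absurd (hEq ▸ ht₁K) hdB.2)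
    have hIK : ∀ u ∈ Set.Ico t₁ d, lam u ∈ Set.range ι := by
      intro u hu
      by_contra hne'
      exact absurd (csInf_le hBbdd ⟨⟨hu.1, le_trans hu.2.le hdIcc.2⟩, hne'⟩)
        (not_le.mpr hu.2)
    exact hdB.2 (segment_lemma ι V hVo hV1 π hπc hπcnt hslice ht₁d
      (hlam.mono (hJ.out ht₁J (hIccJ hdIcc))) hIK)
  · rw [← heq]; exact ht₁K
  · by_contra hnotK
    set B := {u : ℝ | u ∈ Set.Icc t t₁ ∧ lam u ∉ Set.range ι} with hB
    have hBne : B.Nonempty := ⟨t, ⟨⟨le_rfl, hgt.le⟩, hnotK⟩⟩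
    have hIccJ : Set.Icc t t₁ ⊆ J := hJ.out htJ ht₁J
    have hBbdd : BddAbove B := ⟨t₁, fun u hu => hu.1.2⟩
    have hBclosed : IsClosed B := by
      have hBeq : B = Set.Icc t t₁ ∩ Uᶜ := by
        ext u
        constructor
        · rintro ⟨hu1, hu2⟩
          exact ⟨hu1, fun hU' => hu2 ((hUiff u (hIccJ hu1)).mp hU')⟩
        · rintro ⟨hu1, hu2⟩
          exact ⟨hu1, fun hK' => hu2 ((hUiff u (hIccJ hu1)).mpr hK')⟩
      rw [hBeq]
      exact isClosed_Icc.inter hUo.isClosed_compl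
    set d := sSup B with hd
    have hdB : d ∈ B := hBclosed.csSup_mem hBne hBbdd
    have hdIcc : d ∈ Set.Icc t t₁ := hdB.1
    have hdt₁ : d < t₁ := lt_of_le_of_ne hdIcc.2 (fun hEq => absurd (hEq.symm ▸ ht₁K) hdB.2)
    have hIK : ∀ u ∈ Set.Ioc d t₁, lam u ∈ Set.range ι := by
      intro u hu
      by_contra hne'
      exact absurd (le_csSup hBbdd ⟨⟨le_trans hdIcc.1 hu.1.le, hu.2⟩, hne'⟩)
        (not_le.mpr hu.1)
    have hcont' : ContinuousOn (fun u => lam (-u)) (Set.Icc (-t₁) (-d)) := by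
      apply (hlam.mono (hJ.out (hIccJ hdIcc) ht₁J)).comp continuous_neg.continuousOn
      intro u hu
      show -u ∈ Set.Icc d t₁
      exact ⟨by linarith [hu.2], by linarith [hu.1]⟩
    have hK' : ∀ u ∈ Set.Ico (-t₁) (-d), lam (-u) ∈ Set.range ι := by
      intro u hu
      exact hIK (-u) ⟨by linarith [hu.2], by linarith [hu.1]⟩
    have := segment_lemma ι V hVo hV1 π hπc hπcnt hslice (neg_lt_neg hdt₁) hcont' hK'
    rw [neg_neg] at this
    exact hdB.2 this
end

section
/- Let X be a topological space that is Hausdorff, locally path-connected, connected and simply connected, and let 𝔓 be a presheaf of sets over X (an assignment of a set 𝔓(U) to every open U ⊆ X together with restriction maps 𝔓_{U,V} : 𝔓(U) → 𝔓(V) for opens V ⊆ U, with 𝔓_{U,U} = id and 𝔓_{V,W} ∘ 𝔓_{U,V} = 𝔓_{U,W}). Assume: (i) 𝔓 has the localization property: for every family (U_i)_{i∈I} of open subsets of X with union U, the map 𝔓(U) → ∏_{i∈I} 𝔓(U_i), f ↦ (𝔓_{U,U_i}(f)), is injective, and its image consists exactly of the families (f_i)_{i∈I} with 𝔓_{U_i,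 U_i∩U_j}(f_i) = 𝔓_{U_j, U_i∩U_j}(f_j) for all i, j ∈ I; (ii) 𝔓 has the uniqueness property: for every connected open U ⊆ X and every nonempty open V ⊆ U, the map 𝔓_{U,V} is injective; (iii) 𝔓 has the extension property: X can be covered by open sets U such that for every connected nonempty open V ⊆ U the map 𝔓_{U,V} is surjective. Then for every connected nonempty open subset V ⊆ X and every f ∈ 𝔓(V) there exists a unique f̄ ∈ 𝔓(X) with 𝔓_{X,V}(f̄) = f. -/
open TopologicalSpace

universe u v

/-- A presheaf of sets over a topological space `X`: to each open set `U ⊆ X` it assigns a set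
`sec U` of "sections over `U`", and to each inclusion of opens `V ⊆ U` a restriction map
`res : sec U → sec V`, functorially. -/
structure PresheafOfSets (X : Type u) [TopologicalSpace X] where
  sec : Opens X → Type v
  res : ∀ {U V : Opens X}, V ≤ U → sec U → sec V
  res_self : ∀ (U : Opens X) (f : sec U), res le_rfl f = f
  res_res : ∀ {U V W : Opens X} (hVU : V ≤ U) (hWV : W ≤ V) (f : sec U),
    res hWV (res hVU f) = res (hWV.trans hVU) f

namespace PresheafGlob
set_option linter.unusedSectionVars false

open unitInterval

variable {X : Type u} [TopologicalSpace X] [T2Space X] [LocallyPathConnectedSpace X]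
  [ConnectedSpace X] [SimplyConnectedSpace X]

variable (P : PresheafOfSets.{u, v} X)

/-- A bundled local section: an open set together with a section over it. -/
abbrev Sec := Σ U : Opens X, P.sec U

/-- An open set is *good* if it is connected, nonempty, and restriction from it to any
connected nonempty open subset is surjective. -/
def Good (U : Opens X) : Prop :=
  IsPreconnected (U : Set X) ∧ (U : Set X).Nonempty ∧
    ∀ (W : Opens X) (h : W ≤ U), IsPreconnected (W : Set X) → (W : Set X).Nonempty →
      Function.Surjective (P.res h)

/-- Germ equality of two local sections at a point. -/
def geq (x : X) (e e' : Sec P) : Prop :=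
  ∃ W : Opens X, x ∈ W ∧ ∃ (h1 : W ≤ e.1) (h2 : W ≤ e'.1), P.res h1 e.2 = P.res h2 e'.2

/-- The hypotheses (uniqueness and extension properties) bundled. -/
structure Hyp : Prop where
  uniq : ∀ (U V : Opens X), IsPreconnected (U : Set X) → (V : Set X).Nonempty →
    ∀ hVU : V ≤ U, Function.Injective (P.res hVU)
  ext : ∀ x : X, ∃ U : Opens X, x ∈ U ∧
    ∀ V : Opens X, ∀ hVU : V ≤ U, IsPreconnected (V : Set X) → (V : Set X).Nonempty →
      Function.Surjective (P.res hVU)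

variable {P}

lemma geq_refl {x : X} {e : Sec P} (hx : x ∈ e.1) : geq P x e e :=
  ⟨e.1, hx, le_rfl, le_rfl, rfl⟩

lemma geq_pt_congr {x y : X} {e e' : Sec P} (h : geq P x e e') (hxy : x = y) :
    geq P y e e' := hxy ▸ h

lemma geq_symm {x : X} {e e' : Sec P} (h : geq P x e e') : geq P x e' e := by
  obtain ⟨W, hxW, h1, h2, hres⟩ := h
  exact ⟨W, hxW, h2, h1, hres.symm⟩

/-- The path component of `x` in an open set, as an open set. -/
def pcomp (x : X) (U : Opens X) : Opens X :=
  ⟨pathComponentIn (U : Set X) x, U.isOpen.pathComponentIn x⟩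

lemma pcomp_le {x : X} {U : Opens X} : pcomp x U ≤ U :=
  fun _ h => pathComponentIn_subset h

lemma mem_pcomp {x : X} {U : Opens X} (hx : x ∈ U) : x ∈ pcomp x U :=
  mem_pathComponentIn_self hx

lemma pcomp_isPathConnected {x : X} {U : Opens X} (hx : x ∈ U) :
    IsPathConnected ((pcomp x U : Opens X) : Set X) :=
  isPathConnected_pathComponentIn hx

lemma pcomp_isPreconnected {x : X} {U : Opens X} (hx : x ∈ U) :
    IsPreconnected ((pcomp x U : Opens X) : Set X) :=
  (pcomp_isPathConnected hx).isConnected.isPreconnected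

lemma geq_trans {x : X} {e e' e'' : Sec P} (h : geq P x e e') (h' : geq P x e' e'') :
    geq P x e e'' := by
  obtain ⟨W, hxW, h1, h2, hres⟩ := h
  obtain ⟨W', hxW', h1', h2', hres'⟩ := h'
  refine ⟨W ⊓ W', ⟨hxW, hxW'⟩, inf_le_left.trans h1, inf_le_right.trans h2', ?_⟩
  calc P.res (inf_le_left.trans h1) e.2
      = P.res (inf_le_left : W ⊓ W' ≤ W) (P.res h1 e.2) := (P.res_res _ _ _).symm
    _ = P.res inf_le_left (P.res h2 e'.2) := by rw [hres]
    _ = P.res (inf_le_left.trans h2) e'.2 := P.res_res _ _ _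
    _ = P.res (inf_le_right.trans h1') e'.2 := rfl
    _ = P.res (inf_le_right : W ⊓ W' ≤ W') (P.res h1' e'.2) := (P.res_res _ _ _).symm
    _ = P.res inf_le_right (P.res h2' e''.2) := by rw [hres']
    _ = P.res (inf_le_right.trans h2') e''.2 := P.res_res _ _ _

/-- Germ-equal sections restrict equally to the whole path component of the point in the
intersection of their domains. -/
lemma geq_res_eq (hP : Hyp P) {x : X} {e e' : Sec P} (h : geq P x e e')
    (hx1 : x ∈ e.1) (hx2 : x ∈ e'.1) :
    P.res (pcomp_le.trans inf_le_left : pcomp x (e.1 ⊓ e'.1) ≤ e.1) e.2 =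
    P.res (pcomp_le.trans inf_le_right) e'.2 := by
  obtain ⟨W, hxW, h1, h2, hres⟩ := h
  set T : Opens X := e.1 ⊓ e'.1 with hT
  have hxT : x ∈ T := ⟨hx1, hx2⟩
  set C : Opens X := pcomp x T with hC
  set W' : Opens X := pcomp x (W ⊓ T) with hW'
  have hxWT : x ∈ W ⊓ T := ⟨hxW, hxT⟩
  have hW'C : W' ≤ C := by
    intro y hy
    exact (pcomp_isPathConnected hxWT).subset_pathComponentIn (mem_pcomp hxWT)
      (fun z hz => (pathComponentIn_subset hz).2) hy
  have hW'W : W' ≤ W := pcomp_le.trans inf_le_left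
  -- restrictions of both sides to W' agree
  have key : P.res (hW'C : W' ≤ C) (P.res (pcomp_le.trans inf_le_left : C ≤ e.1) e.2)
      = P.res hW'C (P.res (pcomp_le.trans inf_le_right : C ≤ e'.1) e'.2) := by
    rw [P.res_res, P.res_res]
    calc P.res (hW'C.trans (pcomp_le.trans inf_le_left)) e.2
        = P.res (hW'W : W' ≤ W) (P.res h1 e.2) := P.res_res _ _ _ |>.symm
      _ = P.res hW'W (P.res h2 e'.2) := by rw [hres]
      _ = P.res (hW'C.trans (pcomp_le.trans inf_le_right)) e'.2 := P.res_res _ _ _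
  exact hP.uniq C W' (pcomp_isPreconnected hxT) ⟨x, mem_pcomp hxWT⟩ hW'C key

/-- Germ equality propagates along the path component of the intersection of domains. -/
lemma geq_extend (hP : Hyp P) {x y : X} {e e' : Sec P} (h : geq P x e e')
    (hx1 : x ∈ e.1) (hx2 : x ∈ e'.1)
    (hy : y ∈ pathComponentIn ((e.1 ⊓ e'.1 : Opens X) : Set X) x) : geq P y e e' :=
  ⟨pcomp x (e.1 ⊓ e'.1), hy, pcomp_le.trans inf_le_left, pcomp_le.trans inf_le_right,
    geq_res_eq hP h hx1 hx2⟩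

/-- Around every point of any open set there is a good open subset. -/
lemma exists_good (hP : Hyp P) (x : X) (O : Opens X) (hx : x ∈ O) :
    ∃ U : Opens X, Good P U ∧ x ∈ U ∧ U ≤ O := by
  obtain ⟨U₀, hxU₀, hsurj⟩ := hP.ext x
  set C : Opens X := pcomp x (O ⊓ U₀) with hC
  have hxOU : x ∈ O ⊓ U₀ := ⟨hx, hxU₀⟩
  refine ⟨C, ⟨pcomp_isPreconnected hxOU, ⟨x, mem_pcomp hxOU⟩, ?_⟩, mem_pcomp hxOU,
    pcomp_le.trans inf_le_left⟩
  intro W hWC hWconn hWne g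
  have hWU₀ : W ≤ U₀ := hWC.trans (pcomp_le.trans inf_le_right)
  obtain ⟨h, hh⟩ := hsurj W hWU₀ hWconn hWne g
  have hCU₀ : C ≤ U₀ := pcomp_le.trans inf_le_right
  refine ⟨P.res hCU₀ h, ?_⟩
  rw [P.res_res]
  exact hh

/-- Transport of a local section to a good open set through a point. -/
noncomputable def trSec {U : Opens X} (hU : Good P U) {x : X} (hx : x ∈ U) (e : Sec P)
    (hxe : x ∈ e.1) : P.sec U :=
  (hU.2.2 (pcomp x (U ⊓ e.1)) (pcomp_le.trans inf_le_left)
    (pcomp_isPreconnected ⟨hx, hxe⟩) ⟨x, mem_pcomp ⟨hx, hxe⟩⟩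
    (P.res (pcomp_le.trans inf_le_right) e.2)).choose

lemma trSec_geq {U : Opens X} (hU : Good P U) {x : X} (hx : x ∈ U) (e : Sec P)
    (hxe : x ∈ e.1) : geq P x ⟨U, trSec hU hx e hxe⟩ e :=
  ⟨pcomp x (U ⊓ e.1), mem_pcomp ⟨hx, hxe⟩, pcomp_le.trans inf_le_left,
    pcomp_le.trans inf_le_right,
    (hU.2.2 (pcomp x (U ⊓ e.1)) (pcomp_le.trans inf_le_left)
      (pcomp_isPreconnected ⟨hx, hxe⟩) ⟨x, mem_pcomp ⟨hx, hxe⟩⟩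
      (P.res (pcomp_le.trans inf_le_right) e.2)).choose_spec⟩

/-- Two sections of a good open set with the same germ at a point are equal. -/
lemma sec_unique (hP : Hyp P) {U : Opens X} (hU : Good P U) {x : X} {a b : P.sec U}
    (h : geq P x ⟨U, a⟩ ⟨U, b⟩) : a = b := by
  obtain ⟨W, hxW, h1, h2, hres⟩ := h
  exact hP.uniq U W hU.1 ⟨x, hxW⟩ h1 (by convert hres using 2)


section Continuation

open Filter Topology
open scoped Classical

variable (P)

/-- Coherent (germ-continuous) family of local sections along a map `γ : I → X`. -/
def Coherent (γ : unitInterval → X) (g : unitInterval → Sec P) : Prop :=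
  ∀ t : unitInterval, Good P (g t).1 ∧ γ t ∈ (g t).1 ∧
    ∀ᶠ s in nhds t, geq P (γ s) (g s) (g t)

variable {P}

lemma eventually_mem_of_isOpen {S : Set unitInterval} (hS : IsOpen S) {t : unitInterval}
    (ht : t ∈ S) : ∀ᶠ s in nhds t, s ∈ S :=
  Filter.eventually_of_mem (hS.mem_nhds ht) fun _ hs => hs

/-- Uniqueness of coherent continuations. -/
lemma coherent_unique (hP : Hyp P) {γ : unitInterval → X} (hγ : Continuous γ)
    {g g' : unitInterval → Sec P} (hg : Coherent P γ g) (hg' : Coherent P γ g')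
    (h0 : geq P (γ 0) (g 0) (g' 0)) (t : unitInterval) : geq P (γ t) (g t) (g' t) := by
  set S : Set unitInterval := {t | geq P (γ t) (g t) (g' t)} with hSdef
  have hloc : ∀ t : unitInterval, ∀ᶠ s in nhds t,
      geq P (γ s) (g s) (g t) ∧ geq P (γ s) (g' s) (g' t) ∧
      γ s ∈ pathComponentIn (((g t).1 ⊓ (g' t).1 : Opens X) : Set X) (γ t) := by
    intro t
    obtain ⟨hgood, hmem, hev⟩ := hg t
    obtain ⟨hgood', hmem', hev'⟩ := hg' t
    have hC : γ t ∈ ((g t).1 ⊓ (g' t).1 : Opens X) := ⟨hmem, hmem'⟩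
    have hCopen : IsOpen (pathComponentIn (((g t).1 ⊓ (g' t).1 : Opens X) : Set X) (γ t)) :=
      ((g t).1 ⊓ (g' t).1).isOpen.pathComponentIn _
    have h3 : ∀ᶠ s in nhds t,
        γ s ∈ pathComponentIn (((g t).1 ⊓ (g' t).1 : Opens X) : Set X) (γ t) :=
      hγ.continuousAt.preimage_mem_nhds (hCopen.mem_nhds (mem_pathComponentIn_self hC))
    exact hev.and (hev'.and h3)
  have hSopen : IsOpen S := by
    rw [isOpen_iff_mem_nhds]
    intro t ht
    refine Filter.mem_of_superset (hloc t) ?_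
    rintro s ⟨h1, h2, h3⟩
    exact geq_trans h1 (geq_trans (geq_extend hP ht (hg t).2.1 (hg' t).2.1 h3) (geq_symm h2))
  have hScl : IsClosed S := by
    rw [← isOpen_compl_iff, isOpen_iff_mem_nhds]
    intro t ht
    refine Filter.mem_of_superset (hloc t) ?_
    rintro s ⟨h1, h2, h3⟩ hs
    refine ht ?_
    have hgt : geq P (γ s) (g t) (g' t) := geq_trans (geq_symm h1) (geq_trans hs h2)
    have hC : γ t ∈ ((g t).1 ⊓ (g' t).1 : Opens X) := ⟨(hg t).2.1, (hg' t).2.1⟩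
    have hback : γ t ∈ pathComponentIn (((g t).1 ⊓ (g' t).1 : Opens X) : Set X) (γ s) := by
      rw [pathComponentIn_congr h3]
      exact mem_pathComponentIn_self hC
    exact geq_extend hP hgt (pathComponentIn_subset h3).1 (pathComponentIn_subset h3).2 hback
  have : S = Set.univ := (show IsClopen S from ⟨hScl, hSopen⟩).eq_univ ⟨0, h0⟩
  exact (this ▸ Set.mem_univ t : t ∈ S)

/-- Grid point `k/n` in the unit interval (capped at `1`). -/
noncomputable def uPt (n k : ℕ) : unitInterval :=
  ⟨min ((k : ℝ) / (n : ℝ)) 1, ⟨le_min (by positivity) zero_le_one, min_le_right _ _⟩⟩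

lemma uPt_coe (n : ℕ) (hn : 0 < n) {k : ℕ} (hk : k ≤ n) :
    (uPt n k : ℝ) = (k : ℝ) / n := by
  refine min_eq_left ?_
  rw [div_le_one (by exact_mod_cast hn)]
  exact_mod_cast hk

lemma uPt_zero (n : ℕ) : uPt n 0 = 0 := by
  apply Subtype.ext
  simp [uPt]

lemma uPt_last (n : ℕ) {k : ℕ} (hk : n ≤ k) (hn : 0 < n) : uPt n k = 1 := by
  apply Subtype.ext
  refine min_eq_right ?_
  rw [le_div_iff₀ (by exact_mod_cast hn), one_mul]
  exact_mod_cast hk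

/-- The discrete continuation along a sequence of points and good opens. -/
noncomputable def dSeq (pt : ℕ → X) (W : ℕ → Opens X) (e : Sec P) : ℕ → Sec P
  | 0 =>
    if h : Good P (W 0) ∧ pt 0 ∈ W 0 ∧ pt 0 ∈ e.1
      then ⟨W 0, trSec h.1 h.2.1 e h.2.2⟩ else e
  | k + 1 =>
    if h : Good P (W (k + 1)) ∧ pt (k + 1) ∈ W (k + 1) ∧ pt (k + 1) ∈ (dSeq pt W e k).1
      then ⟨W (k + 1), trSec h.1 h.2.1 (dSeq pt W e k) h.2.2⟩ else dSeq pt W e k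

section dSeqFacts

variable {pt : ℕ → X} {W : ℕ → Opens X} {e : Sec P}
variable (hWg : ∀ k, Good P (W k)) (hpt : ∀ k, pt k ∈ W k)
  (hlink : ∀ k, pt (k + 1) ∈ W k) (h0 : pt 0 ∈ e.1)

include hWg hpt h0 in
lemma dSeq_fst (hlink : ∀ k, pt (k + 1) ∈ W k) : ∀ k, (dSeq pt W e k).1 = W k := by
  intro k
  induction k with
  | zero => rw [dSeq, dif_pos ⟨hWg 0, hpt 0, h0⟩]
  | succ k ih =>
    rw [dSeq, dif_pos ⟨hWg (k + 1), hpt (k + 1), by rw [ih]; exact hlink k⟩]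

include hWg hpt h0 in
lemma dSeq_zero_geq : geq P (pt 0) (dSeq pt W e 0) e := by
  rw [dSeq, dif_pos ⟨hWg 0, hpt 0, h0⟩]
  exact trSec_geq _ _ _ _

include hWg hpt hlink h0 in
lemma dSeq_succ_geq (k : ℕ) :
    geq P (pt (k + 1)) (dSeq pt W e (k + 1)) (dSeq pt W e k) := by
  rw [dSeq, dif_pos ⟨hWg (k + 1), hpt (k + 1),
    by rw [dSeq_fst hWg hpt h0 hlink k]; exact hlink k⟩]
  exact trSec_geq _ _ _ _

end dSeqFacts

/-- Index of the grid interval containing `t`. -/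
noncomputable def idx (n : ℕ) (t : unitInterval) : ℕ :=
  min (Nat.floor ((n : ℝ) * t)) (n - 1)

lemma idx_le (n : ℕ) (t : unitInterval) : idx n t ≤ n - 1 := min_le_right _ _

lemma idx_div_le (n : ℕ) (hn : 0 < n) (t : unitInterval) : (idx n t : ℝ) / n ≤ t := by
  rw [div_le_iff₀ (by exact_mod_cast hn)]
  calc (idx n t : ℝ) ≤ (Nat.floor ((n : ℝ) * t) : ℝ) := by
        exact_mod_cast min_le_left _ _
    _ ≤ (n : ℝ) * t := Nat.floor_le (mul_nonneg (Nat.cast_nonneg n) t.2.1)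
    _ = t * n := mul_comm _ _

lemma le_idx_succ_div (n : ℕ) (hn : 0 < n) (t : unitInterval) :
    (t : ℝ) ≤ ((idx n t : ℝ) + 1) / n := by
  rcases le_or_gt (Nat.floor ((n : ℝ) * t)) (n - 1) with h | h
  · have hidx : idx n t = Nat.floor ((n : ℝ) * t) := min_eq_left h
    rw [hidx, le_div_iff₀ (by exact_mod_cast hn)]
    have := Nat.lt_floor_add_one ((n : ℝ) * t)
    nlinarith [this]
  · have hidx : idx n t = n - 1 := min_eq_right h.le
    rw [hidx]
    have hcast : ((n - 1 : ℕ) : ℝ) = (n : ℝ) - 1 := by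
      rw [Nat.cast_sub hn]; simp
    rw [hcast]
    have : ((n : ℝ) - 1 + 1) / n = 1 := by
      field_simp; ring
    rw [this]
    exact t.2.2

lemma idx_eq (n : ℕ) (hn : 0 < n) {m : ℕ} (hm : m ≤ n - 1) {s : unitInterval}
    (h1 : (m : ℝ) / n ≤ s) (h2 : (s : ℝ) < ((m : ℝ) + 1) / n) : idx n s = m := by
  have hfl : Nat.floor ((n : ℝ) * s) = m := by
    rw [Nat.floor_eq_iff (mul_nonneg (Nat.cast_nonneg n) s.2.1)]
    constructor
    · rw [div_le_iff₀ (by exact_mod_cast hn)] at h1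
      nlinarith
    · rw [lt_div_iff₀ (by exact_mod_cast hn)] at h2
      nlinarith
  rw [idx, hfl]
  exact min_eq_left hm

lemma idx_one (n : ℕ) (hn : 0 < n) : idx n 1 = n - 1 := by
  have : ((n : ℝ) * (1 : unitInterval)) = (n : ℝ) := by norm_num
  rw [idx, this, Nat.floor_natCast]
  exact min_eq_right (Nat.sub_le _ _)

/-- From a Lebesgue-style subdivision datum, construct a coherent continuation whose value at `1`
is the discrete continuation. -/
lemma discrete_coherent (hP : Hyp P) {γ : unitInterval → X} (hγ : Continuous γ)
    (n : ℕ) (hn : 0 < n) (W0 : ℕ → Opens X)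
    (hWg0 : ∀ k, k < n → Good P (W0 k))
    (hWc0 : ∀ k, k < n → ∀ t : unitInterval, (k : ℝ) / n ≤ t → (t : ℝ) ≤ ((k : ℝ) + 1) / n →
      γ t ∈ W0 k)
    (e : Sec P) (he : Good P e.1) (h0 : γ 0 ∈ e.1) :
    ∃ g : unitInterval → Sec P, Coherent P γ g ∧ geq P (γ 0) (g 0) e ∧
      g 1 = dSeq (fun k => γ (uPt n k)) (fun k => W0 (min k (n - 1))) e (n - 1) := by
  have hnR : (0 : ℝ) < n := by exact_mod_cast hn
  have hc1 : ((n - 1 : ℕ) : ℝ) = (n : ℝ) - 1 := by rw [Nat.cast_sub hn]; simp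
  set W : ℕ → Opens X := fun k => W0 (min k (n - 1)) with hWdef
  set pt : ℕ → X := fun k => γ (uPt n k) with hptdef
  have hsub : n - 1 < n := Nat.sub_lt hn one_pos
  have hWg : ∀ k, Good P (W k) := fun k => hWg0 _ (lt_of_le_of_lt (min_le_right _ _) hsub)
  have hWiv : ∀ k, k ≤ n - 1 → ∀ t : unitInterval,
      (k : ℝ) / n ≤ t → (t : ℝ) ≤ ((k : ℝ) + 1) / n → γ t ∈ W k := by
    intro k hk t h1 h2
    have hmk : min k (n - 1) = k := min_eq_left hk
    show γ t ∈ W0 (min k (n - 1))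
    rw [hmk]
    exact hWc0 k (lt_of_le_of_lt hk hsub) t h1 h2
  have hlast : γ 1 ∈ W0 (n - 1) := by
    apply hWc0 (n - 1) hsub 1
    · rw [hc1, div_le_iff₀ hnR]
      have : ((1 : unitInterval) : ℝ) = 1 := rfl
      rw [this]; linarith
    · rw [hc1]
      have h1 : ((n : ℝ) - 1 + 1) / n = 1 := by field_simp; ring
      rw [h1]
      exact le_refl _
  have hptmem : ∀ k, pt k ∈ W k := by
    intro k
    rcases le_or_gt k (n - 1) with hk | hk
    · have hkn : k ≤ n := le_trans hk (Nat.sub_le _ _)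
      apply hWiv k hk
      · rw [uPt_coe n hn hkn]
      · rw [uPt_coe n hn hkn]
        apply (div_le_div_iff_of_pos_right hnR).mpr
        linarith
    · have hkn : n ≤ k := by omega
      show γ (uPt n k) ∈ W0 (min k (n - 1))
      rw [uPt_last n hkn hn, min_eq_right (by omega : n - 1 ≤ k)]
      exact hlast
  have hlink : ∀ k, pt (k + 1) ∈ W k := by
    intro k
    rcases le_or_gt (k + 1) n with hk | hk
    · have hkk : k ≤ n - 1 := by omega
      apply hWiv k hkk
      · rw [uPt_coe n hn hk]
        apply (div_le_div_iff_of_pos_right hnR).mpr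
        exact_mod_cast Nat.le_succ k
      · rw [uPt_coe n hn hk]
        push_cast
        exact le_refl _
    · have hkn : n ≤ k + 1 := by omega
      show γ (uPt n (k + 1)) ∈ W0 (min k (n - 1))
      rw [uPt_last n hkn hn, min_eq_right (by omega : n - 1 ≤ k)]
      exact hlast
  have hpt0 : pt 0 = γ 0 := by rw [hptdef]; simp only [uPt_zero]
  have h0' : pt 0 ∈ e.1 := by rw [hpt0]; exact h0
  have hfst : ∀ k, (dSeq pt W e k).1 = W k := dSeq_fst hWg hptmem h0' hlink
  refine ⟨fun t => dSeq pt W e (idx n t), ?_, ?_, ?_⟩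
  · -- coherence
    intro t
    set k := idx n t with hkdef
    have hkle : k ≤ n - 1 := idx_le n t
    have hlow : (k : ℝ) / n ≤ t := idx_div_le n hn t
    have hhigh : (t : ℝ) ≤ ((k : ℝ) + 1) / n := le_idx_succ_div n hn t
    have hmemk : γ t ∈ W k := hWiv k hkle t hlow hhigh
    refine ⟨by rw [hfst]; exact hWg k, by rw [hfst]; exact hmemk, ?_⟩
    rcases eq_or_lt_of_le hlow with heq | hlt
    · -- grid point : (k:ℝ)/n = t
      rcases Nat.eq_zero_or_pos k with hk0 | hkpos
      · have hopen : IsOpen {s : unitInterval | (s : ℝ) < 1 / n} :=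
          isOpen_lt continuous_subtype_val continuous_const
        have htmem : t ∈ {s : unitInterval | (s : ℝ) < 1 / n} := by
          show (t : ℝ) < 1 / n
          rw [← heq, hk0]
          simp only [Nat.cast_zero, zero_div]
          positivity
        filter_upwards [eventually_mem_of_isOpen hopen htmem] with s hs
        have hidxs : idx n s = 0 := by
          apply idx_eq n hn (Nat.zero_le _)
          · simpa using s.2.1
          · simpa using hs
        rw [hidxs, ← hkdef, hk0]
        refine geq_refl ?_
        rw [hfst]
        apply hWiv 0 (Nat.zero_le _) s
        · simpa using s.2.1
        · simpa using le_of_lt hs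
      · -- k = m + 1
        obtain ⟨m, hkm⟩ : ∃ m, k = m + 1 := ⟨k - 1, by omega⟩
        have hstep : geq P (pt k) (dSeq pt W e k) (dSeq pt W e m) := by
          rw [hkm]
          exact dSeq_succ_geq hWg hptmem hlink h0' m
        have hptk : pt k = γ t := by
          have hcoe : (uPt n k : ℝ) = (k : ℝ) / n :=
            uPt_coe n hn (le_trans hkle (Nat.sub_le _ _))
          show γ (uPt n k) = γ t
          exact congrArg γ (Subtype.ext (hcoe.trans heq))
        rw [hptk] at hstep
        have hmemm : γ t ∈ W m := by
          apply hWiv m (by omega) t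
          · refine le_trans ?_ hlow
            apply (div_le_div_iff_of_pos_right hnR).mpr
            exact_mod_cast (by omega : m ≤ k)
          · rw [← heq]
            apply le_of_eq
            rw [hkm]
            push_cast
            ring
        have hmemD : γ t ∈ ((dSeq pt W e k).1 ⊓ (dSeq pt W e m).1 : Opens X) := by
          constructor
          · rw [hfst]; exact hmemk
          · rw [hfst]; exact hmemm
        have hCopen : IsOpen (pathComponentIn
            (((dSeq pt W e k).1 ⊓ (dSeq pt W e m).1 : Opens X) : Set X) (γ t)) :=
          ((dSeq pt W e k).1 ⊓ (dSeq pt W e m).1).isOpen.pathComponentIn _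
        have hev3 : ∀ᶠ s in nhds t, γ s ∈ pathComponentIn
            (((dSeq pt W e k).1 ⊓ (dSeq pt W e m).1 : Opens X) : Set X) (γ t) :=
          hγ.continuousAt.preimage_mem_nhds (hCopen.mem_nhds (mem_pathComponentIn_self hmemD))
        have hopen2 : IsOpen {s : unitInterval |
            (m : ℝ) / n < (s : ℝ) ∧ (s : ℝ) < ((k : ℝ) + 1) / n} :=
          (isOpen_lt continuous_const continuous_subtype_val).inter
            (isOpen_lt continuous_subtype_val continuous_const)
        have htmem2 : t ∈ {s : unitInterval |
            (m : ℝ) / n < (s : ℝ) ∧ (s : ℝ) < ((k : ℝ) + 1) / n} := by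
          constructor
          · rw [← heq]
            apply (div_lt_div_iff_of_pos_right hnR).mpr
            exact_mod_cast (by omega : m < k)
          · rw [← heq]
            apply (div_lt_div_iff_of_pos_right hnR).mpr
            linarith
        filter_upwards [hev3, eventually_mem_of_isOpen hopen2 htmem2] with s hs3 hs12
        obtain ⟨hs1, hs2⟩ := hs12
        rcases le_or_gt ((k : ℝ) / n) (s : ℝ) with hcase | hcase
        · have hidxs : idx n s = k := idx_eq n hn hkle hcase hs2
          rw [hidxs]
          refine geq_refl ?_
          rw [hfst]
          exact hWiv k hkle s hcase (le_of_lt hs2)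
        · have hidxs : idx n s = m := by
            apply idx_eq n hn (by omega : m ≤ n - 1) (le_of_lt hs1)
            rw [show ((m : ℝ) + 1) / n = (k : ℝ) / n by rw [hkm]; push_cast; ring]
            exact hcase
          rw [hidxs]
          refine geq_symm (geq_extend hP hstep ?_ ?_ hs3)
          · rw [hfst]; exact hmemk
          · rw [hfst]; exact hmemm
    · -- k/n < t
      rcases lt_or_eq_of_le hhigh with hlt2 | heq2
      · have hopen2 : IsOpen {s : unitInterval |
            (k : ℝ) / n < (s : ℝ) ∧ (s : ℝ) < ((k : ℝ) + 1) / n} :=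
          (isOpen_lt continuous_const continuous_subtype_val).inter
            (isOpen_lt continuous_subtype_val continuous_const)
        filter_upwards [eventually_mem_of_isOpen hopen2 ⟨hlt, hlt2⟩] with s hs12
        obtain ⟨hs1, hs2⟩ := hs12
        have hidxs : idx n s = k := idx_eq n hn hkle (le_of_lt hs1) hs2
        rw [hidxs]
        refine geq_refl ?_
        rw [hfst]
        exact hWiv k hkle s (le_of_lt hs1) (le_of_lt hs2)
      · -- t = (k+1)/n : forces k = n-1 and t = 1
        have hkn1 : k = n - 1 := by
          by_contra hne
          have hk1 : k + 1 ≤ n - 1 := by omega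
          have : idx n t = k + 1 := by
            apply idx_eq n hn hk1
            · push_cast
              rw [← heq2]
            · push_cast
              rw [heq2]
              apply (div_lt_div_iff_of_pos_right hnR).mpr
              linarith
          omega
        have hkend : ((k : ℝ) + 1) / n = 1 := by
          rw [hkn1, hc1]; field_simp; ring
        have hopen3 : IsOpen {s : unitInterval | (k : ℝ) / n < (s : ℝ)} :=
          isOpen_lt continuous_const continuous_subtype_val
        filter_upwards [eventually_mem_of_isOpen hopen3 hlt] with s hs
        have hsle : (s : ℝ) ≤ ((k : ℝ) + 1) / n := by rw [hkend]; exact s.2.2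
        have hidxs : idx n s = k := by
          rcases lt_or_eq_of_le hsle with h | h
          · exact idx_eq n hn hkle (le_of_lt hs) h
          · have hs1 : s = 1 := Subtype.ext (by rw [h, hkend]; rfl)
            rw [hs1, idx_one n hn, hkn1]
        rw [hidxs]
        refine geq_refl ?_
        rw [hfst]
        exact hWiv k hkle s (le_of_lt hs) hsle
  · -- initial condition
    have hidx0 : idx n 0 = 0 := by
      apply idx_eq n hn (Nat.zero_le _)
      · simp
      · simp only [Nat.cast_zero, zero_add]
        show ((0 : unitInterval) : ℝ) < 1 / n
        have : ((0 : unitInterval) : ℝ) = 0 := rfl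
        rw [this]
        positivity
    show geq P (γ 0) (dSeq pt W e (idx n 0)) e
    rw [hidx0]
    have := dSeq_zero_geq hWg hptmem h0'
    rwa [hpt0] at this
  · show dSeq pt W e (idx n 1) = dSeq pt W e (n - 1)
    rw [idx_one n hn]

/-- Existence of coherent continuations along any path. -/
lemma coherent_exists (hP : Hyp P) {γ : unitInterval → X} (hγ : Continuous γ)
    (e : Sec P) (he : Good P e.1) (h0 : γ 0 ∈ e.1) :
    ∃ g : unitInterval → Sec P, Coherent P γ g ∧ geq P (γ 0) (g 0) e := by
  have hgood : ∀ x : X, ∃ U : Opens X, Good P U ∧ x ∈ U := by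
    intro x
    obtain ⟨U, hU, hx, _⟩ := exists_good hP x ⊤ trivial
    exact ⟨U, hU, hx⟩
  choose c hcg hcm using hgood
  obtain ⟨δ, hδ, hball⟩ := lebesgue_number_lemma_of_metric
    (isCompact_univ (X := unitInterval)) (fun x : X => (c x).isOpen.preimage hγ)
    (fun t _ => Set.mem_iUnion.mpr ⟨γ t, hcm (γ t)⟩)
  obtain ⟨n, hnn⟩ := exists_nat_gt (1 / δ)
  have hn : 0 < n := by
    have : (0 : ℝ) < n := lt_trans (by positivity) hnn
    exact_mod_cast this
  have hnR : (0 : ℝ) < n := by exact_mod_cast hn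
  have hδn : 1 / (n : ℝ) < δ := by
    rw [div_lt_iff₀ hnR]
    rw [div_lt_iff₀ hδ] at hnn
    linarith [mul_comm δ (n : ℝ)]
  have hsq : ∀ k : ℕ, ∃ W : Opens X, k < n →
      Good P W ∧ ∀ t : unitInterval, (k : ℝ) / n ≤ t → (t : ℝ) ≤ ((k : ℝ) + 1) / n →
        γ t ∈ W := by
    intro k
    by_cases hk : k < n
    · obtain ⟨x', hx'⟩ := hball (uPt n k) trivial
      refine ⟨c x', fun _ => ⟨hcg x', fun t h1 h2 => ?_⟩⟩
      refine hx' ?_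
      show dist t (uPt n k) < δ
      rw [Subtype.dist_eq, Real.dist_eq, uPt_coe n hn hk.le]
      rw [abs_of_nonneg (by linarith)]
      have : (t : ℝ) - (k : ℝ) / n ≤ 1 / n := by
        have hsplit : ((k : ℝ) + 1) / n = (k : ℝ) / n + 1 / n := by ring
        rw [hsplit] at h2
        linarith
      linarith
    · exact ⟨⊤, fun h => absurd h hk⟩
  choose W0 hW0 using hsq
  obtain ⟨g, hcoh, hinit, _⟩ := discrete_coherent hP hγ n hn W0
    (fun k hk => (hW0 k hk).1) (fun k hk => (hW0 k hk).2) e he h0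
  exact ⟨g, hcoh, hinit⟩

/-- A constant family is coherent along any path staying in its domain. -/
lemma coherent_const {γ : unitInterval → X} {e : Sec P} (he : Good P e.1)
    (hmem : ∀ t, γ t ∈ e.1) : Coherent P γ (fun _ => e) := fun t =>
  ⟨he, hmem t, Filter.Eventually.of_forall fun s => geq_refl (hmem s)⟩

/-- The map doubling the parameter, capped at `1`. -/
noncomputable def stretch : unitInterval → unitInterval := fun t =>
  ⟨min (2 * (t : ℝ)) 1, ⟨le_min (mul_nonneg (by norm_num) t.2.1) zero_le_one, min_le_right _ _⟩⟩

lemma stretch_continuous : Continuous stretch :=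
  Continuous.subtype_mk ((continuous_const.mul continuous_subtype_val).min continuous_const) _

lemma stretch_zero : stretch 0 = 0 := by
  apply Subtype.ext
  show min (2 * ((0 : unitInterval) : ℝ)) 1 = ((0 : unitInterval) : ℝ)
  norm_num

lemma stretch_one : stretch 1 = 1 := by
  apply Subtype.ext
  show min (2 * ((1 : unitInterval) : ℝ)) 1 = ((1 : unitInterval) : ℝ)
  have h1 : ((1 : unitInterval) : ℝ) = 1 := rfl
  rw [h1]
  norm_num

lemma stretch_coe_of_le {t : unitInterval} (ht : (t : ℝ) ≤ 1 / 2) :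
    ((stretch t : unitInterval) : ℝ) = 2 * (t : ℝ) :=
  min_eq_left (by linarith)

lemma stretch_eq_one_of_ge {t : unitInterval} (ht : 1 / 2 ≤ (t : ℝ)) : stretch t = 1 := by
  apply Subtype.ext
  show min (2 * (t : ℝ)) 1 = ((1 : unitInterval) : ℝ)
  have h1 : ((1 : unitInterval) : ℝ) = 1 := rfl
  rw [h1]
  exact min_eq_right (by linarith)

/-- Concatenating a coherent continuation with a constant tail inside its last domain. -/
lemma coherent_trans {a b z : X} (p : Path a b) (q : Path b z)
    {g : unitInterval → Sec P} (hg : Coherent P (fun t => p t) g)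
    (hq : ∀ s : unitInterval, q s ∈ (g 1).1) :
    Coherent P (fun t => (p.trans q) t) (fun t => g (stretch t)) := by
  have htrans1 : ∀ s : unitInterval, (s : ℝ) ≤ 1 / 2 → (p.trans q) s = p (stretch s) := by
    intro s hs
    rw [Path.trans_apply, dif_pos hs]
    exact congrArg p (Subtype.ext (stretch_coe_of_le hs).symm)
  have htrans2 : ∀ s : unitInterval, ¬((s : ℝ) ≤ 1 / 2) → (p.trans q) s ∈ (g 1).1 := by
    intro s hs
    rw [Path.trans_apply, dif_neg hs]
    exact hq _
  intro t
  refine ⟨(hg (stretch t)).1, ?_, ?_⟩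
  · show (p.trans q) t ∈ (g (stretch t)).1
    by_cases ht : (t : ℝ) ≤ 1 / 2
    · rw [htrans1 t ht]
      exact (hg (stretch t)).2.1
    · rw [stretch_eq_one_of_ge (le_of_not_ge ht)]
      exact htrans2 t ht
  · rcases lt_trichotomy ((t : ℝ)) (1 / 2) with hlt | heq | hgt
    · have hev : ∀ᶠ s in nhds t,
          geq P (p (stretch s)) (g (stretch s)) (g (stretch t)) :=
        (stretch_continuous.continuousAt).eventually (hg (stretch t)).2.2
      have hopen : IsOpen {s : unitInterval | (s : ℝ) < 1 / 2} :=
        isOpen_lt continuous_subtype_val continuous_const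
      filter_upwards [hev, eventually_mem_of_isOpen hopen hlt] with s h1 h2
      show geq P ((p.trans q) s) (g (stretch s)) (g (stretch t))
      rw [htrans1 s (le_of_lt h2)]
      exact h1
    · have hst : stretch t = 1 := stretch_eq_one_of_ge (le_of_eq heq.symm)
      have hev : ∀ᶠ s in nhds t,
          geq P (p (stretch s)) (g (stretch s)) (g (stretch t)) :=
        (stretch_continuous.continuousAt).eventually (hg (stretch t)).2.2
      filter_upwards [hev] with s h1
      show geq P ((p.trans q) s) (g (stretch s)) (g (stretch t))
      by_cases hs : (s : ℝ) ≤ 1 / 2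
      · rw [htrans1 s hs]
        exact h1
      · have hss : stretch s = 1 := stretch_eq_one_of_ge (le_of_not_ge hs)
        rw [hss, hst]
        exact geq_refl (htrans2 s hs)
    · have hst : stretch t = 1 := stretch_eq_one_of_ge (le_of_lt hgt)
      have hopen : IsOpen {s : unitInterval | 1 / 2 < (s : ℝ)} :=
        isOpen_lt continuous_const continuous_subtype_val
      filter_upwards [eventually_mem_of_isOpen hopen hgt] with s h2
      show geq P ((p.trans q) s) (g (stretch s)) (g (stretch t))
      have hss : stretch s = 1 := stretch_eq_one_of_ge (le_of_lt h2)
      rw [hss, hst]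
      exact geq_refl (htrans2 s (not_le.mpr h2))

/-- The ladder lemma: discrete continuations along two pointwise-joined sequences of points,
with the same good opens, coincide. -/
lemma dSeq_ladder (hP : Hyp P) {pt pt' : ℕ → X} {W : ℕ → Opens X} {e : Sec P}
    (hWg : ∀ k, Good P (W k)) (hpt : ∀ k, pt k ∈ W k) (hpt' : ∀ k, pt' k ∈ W k)
    (hlink : ∀ k, pt (k + 1) ∈ W k) (hlink' : ∀ k, pt' (k + 1) ∈ W k)
    (h0 : pt 0 ∈ e.1) (hpp0 : pt 0 = pt' 0)
    (hjoin : ∀ k, JoinedIn ((W (k + 1) ⊓ W k : Opens X) : Set X) (pt (k + 1)) (pt' (k + 1))) :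
    ∀ k, dSeq pt W e k = dSeq pt' W e k := by
  have h0' : pt' 0 ∈ e.1 := hpp0 ▸ h0
  intro k
  induction k with
  | zero =>
    rw [dSeq, dSeq, dif_pos ⟨hWg 0, hpt 0, h0⟩, dif_pos ⟨hWg 0, hpt' 0, h0'⟩]
    have hA := trSec_geq (hWg 0) (hpt 0) e h0
    have hB := geq_pt_congr (trSec_geq (hWg 0) (hpt' 0) e h0') hpp0.symm
    have hab := sec_unique hP (hWg 0) (geq_trans hA (geq_symm hB))
    exact congrArg (fun s => (⟨W 0, s⟩ : Sec P)) hab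
  | succ k ih =>
    have hmL : pt (k + 1) ∈ (dSeq pt W e k).1 := by
      rw [dSeq_fst hWg hpt h0 hlink k]; exact hlink k
    have hmR : pt' (k + 1) ∈ (dSeq pt' W e k).1 := by
      rw [dSeq_fst hWg hpt' h0' hlink' k]; exact hlink' k
    rw [dSeq, dSeq, dif_pos ⟨hWg (k + 1), hpt (k + 1), hmL⟩,
      dif_pos ⟨hWg (k + 1), hpt' (k + 1), hmR⟩]
    have hA := trSec_geq (hWg (k + 1)) (hpt (k + 1)) (dSeq pt W e k) hmL
    have hB := trSec_geq (hWg (k + 1)) (hpt' (k + 1)) (dSeq pt' W e k) hmR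
    have hB' : geq P (pt' (k + 1))
        ⟨W (k + 1), trSec (hWg (k + 1)) (hpt' (k + 1)) (dSeq pt' W e k) hmR⟩
        (dSeq pt W e k) := by
      rw [ih]; exact hB
    have hcomp : pt' (k + 1) ∈ pathComponentIn
        ((((⟨W (k + 1), trSec (hWg (k + 1)) (hpt (k + 1)) (dSeq pt W e k) hmL⟩ : Sec P).1 ⊓
          (dSeq pt W e k).1 : Opens X)) : Set X) (pt (k + 1)) := by
      show JoinedIn _ _ _
      have hWeq : ((W (k + 1) ⊓ (dSeq pt W e k).1 : Opens X) : Set X)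
          = ((W (k + 1) ⊓ W k : Opens X) : Set X) := by
        rw [dSeq_fst hWg hpt h0 hlink k]
      rw [hWeq]
      exact hjoin k
    have hA' : geq P (pt' (k + 1))
        ⟨W (k + 1), trSec (hWg (k + 1)) (hpt (k + 1)) (dSeq pt W e k) hmL⟩
        (dSeq pt W e k) :=
      geq_extend hP hA (hpt (k + 1)) hmL hcomp
    have hab := sec_unique hP (hWg (k + 1)) (geq_trans hA' (geq_symm hB'))
    exact congrArg (fun s => (⟨W (k + 1), s⟩ : Sec P)) hab

/-- Homotopy invariance of the final germ of coherent continuations. -/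
lemma final_homotopy (hP : Hyp P) {H : unitInterval × unitInterval → X} (hHc : Continuous H)
    {x₀ x₁ : X} (hH0 : ∀ s, H (s, 0) = x₀) (hH1 : ∀ s, H (s, 1) = x₁)
    {e : Sec P} (he : Good P e.1) (hx₀ : x₀ ∈ e.1)
    {g g' : unitInterval → Sec P}
    (hg : Coherent P (fun t => H (0, t)) g) (hg' : Coherent P (fun t => H (1, t)) g')
    (h0 : geq P x₀ (g 0) e) (h0' : geq P x₀ (g' 0) e) :
    geq P x₁ (g 1) (g' 1) := by
  classical
  have hgood : ∀ x : X, ∃ U : Opens X, Good P U ∧ x ∈ U := by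
    intro x
    obtain ⟨U, hU, hx, _⟩ := exists_good hP x ⊤ trivial
    exact ⟨U, hU, hx⟩
  choose c hcg hcm using hgood
  obtain ⟨δ, hδ, hball⟩ := lebesgue_number_lemma_of_metric
    (isCompact_univ (X := unitInterval × unitInterval))
    (fun x : X => (c x).isOpen.preimage hHc)
    (fun t _ => Set.mem_iUnion.mpr ⟨H t, hcm (H t)⟩)
  obtain ⟨n, hnn⟩ := exists_nat_gt (1 / δ)
  have hn : 0 < n := by
    have : (0 : ℝ) < n := lt_trans (by positivity) hnn
    exact_mod_cast this
  have hnR : (0 : ℝ) < n := by exact_mod_cast hn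
  have hc1 : ((n - 1 : ℕ) : ℝ) = (n : ℝ) - 1 := by rw [Nat.cast_sub hn]; simp
  have hsub : n - 1 < n := Nat.sub_lt hn one_pos
  have hδn : 1 / (n : ℝ) < δ := by
    rw [div_lt_iff₀ hnR]
    rw [div_lt_iff₀ hδ] at hnn
    linarith [mul_comm δ (n : ℝ)]
  have hdist : ∀ m : ℕ, m < n → ∀ u : unitInterval, (m : ℝ) / n ≤ u →
      (u : ℝ) ≤ ((m : ℝ) + 1) / n → dist u (uPt n m) < δ := by
    intro m hm u h1 h2
    rw [Subtype.dist_eq, Real.dist_eq, uPt_coe n hn hm.le, abs_of_nonneg (by linarith)]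
    have hsplit : ((m : ℝ) + 1) / n = (m : ℝ) / n + 1 / n := by ring
    rw [hsplit] at h2
    linarith
  have hsq : ∀ j k : ℕ, ∃ W : Opens X, j < n → k < n →
      Good P W ∧ ∀ s t : unitInterval, (j : ℝ) / n ≤ s → (s : ℝ) ≤ ((j : ℝ) + 1) / n →
        (k : ℝ) / n ≤ t → (t : ℝ) ≤ ((k : ℝ) + 1) / n → H (s, t) ∈ W := by
    intro j k
    by_cases hjk : j < n ∧ k < n
    · obtain ⟨x', hx'⟩ := hball (uPt n j, uPt n k) trivial
      refine ⟨c x', fun _ _ => ⟨hcg x', fun s t h1 h2 h3 h4 => hx' ?_⟩⟩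
      show dist (s, t) (uPt n j, uPt n k) < δ
      rw [Prod.dist_eq]
      exact max_lt (hdist j hjk.1 s h1 h2) (hdist k hjk.2 t h3 h4)
    · exact ⟨⊤, fun h1 h2 => absurd ⟨h1, h2⟩ hjk⟩
  choose W0 hW0 using hsq
  -- membership of the edges in the squares of their columns
  have hedgemem : ∀ i j : ℕ, j < n → i = j ∨ i = j + 1 → ∀ k, k < n →
      ∀ t : unitInterval, (k : ℝ) / n ≤ t → (t : ℝ) ≤ ((k : ℝ) + 1) / n →
        H (uPt n i, t) ∈ W0 j k := by
    intro i j hj hi k hk t h1 h2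
    refine (hW0 j k hj hk).2 (uPt n i) t ?_ ?_ h1 h2
    · rcases hi with rfl | rfl
      · rw [uPt_coe n hn hj.le]
      · rw [uPt_coe n hn (by omega : j + 1 ≤ n)]
        apply (div_le_div_iff_of_pos_right hnR).mpr
        push_cast
        linarith
    · rcases hi with rfl | rfl
      · rw [uPt_coe n hn hj.le]
        apply (div_le_div_iff_of_pos_right hnR).mpr
        linarith
      · rw [uPt_coe n hn (by omega : j + 1 ≤ n)]
        push_cast
        linarith
  -- bounds: `uPt n k` and `uPt n (k+1)` lie in the interval with index `min k (n-1)`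
  have hbound : ∀ k : ℕ, ((min k (n - 1) : ℕ) : ℝ) / n ≤ (uPt n k : ℝ) ∧
      (uPt n k : ℝ) ≤ (((min k (n - 1) : ℕ) : ℝ) + 1) / n := by
    intro k
    rcases le_or_gt k (n - 1) with hk | hk
    · rw [min_eq_left hk, uPt_coe n hn (by omega)]
      refine ⟨le_refl _, ?_⟩
      apply (div_le_div_iff_of_pos_right hnR).mpr
      linarith
    · rw [min_eq_right hk.le]
      have h1 : (uPt n k : ℝ) = 1 := by
        rw [uPt_last n (by omega) hn]; rfl
      rw [h1, hc1]
      constructor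
      · rw [div_le_one hnR]; linarith
      · have h2 : (n : ℝ) - 1 + 1 = n := by ring
        rw [h2, div_self hnR.ne']
  have hbound' : ∀ k : ℕ, ((min k (n - 1) : ℕ) : ℝ) / n ≤ (uPt n (k + 1) : ℝ) ∧
      (uPt n (k + 1) : ℝ) ≤ (((min k (n - 1) : ℕ) : ℝ) + 1) / n := by
    intro k
    rcases le_or_gt k (n - 1) with hk | hk
    · rw [min_eq_left hk, uPt_coe n hn (by omega)]
      constructor
      · apply (div_le_div_iff_of_pos_right hnR).mpr
        push_cast
        linarith
      · apply (div_le_div_iff_of_pos_right hnR).mpr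
        push_cast
        linarith
    · rw [min_eq_right hk.le]
      have h1 : (uPt n (k + 1) : ℝ) = 1 := by
        rw [uPt_last n (by omega) hn]; rfl
      rw [h1, hc1]
      constructor
      · rw [div_le_one hnR]; linarith
      · have h2 : (n : ℝ) - 1 + 1 = n := by ring
        rw [h2, div_self hnR.ne']
  have hminlt : ∀ k : ℕ, min k (n - 1) < n := fun k => lt_of_le_of_lt (min_le_right _ _) hsub
  have hγc : ∀ i : ℕ, Continuous (fun t : unitInterval => H (uPt n i, t)) := fun i =>
    hHc.comp (continuous_const.prodMk continuous_id)
  -- column continuations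
  have hcol : ∀ i j : ℕ, j < n → i = j ∨ i = j + 1 →
      ∃ gc : unitInterval → Sec P,
        Coherent P (fun t => H (uPt n i, t)) gc ∧ geq P (H (uPt n i, 0)) (gc 0) e ∧
        gc 1 = dSeq (fun k => H (uPt n i, uPt n k))
          (fun k => W0 j (min k (n - 1))) e (n - 1) := by
    intro i j hj hi
    exact discrete_coherent hP (hγc i) n hn (W0 j) (fun k hk => (hW0 j k hj hk).1)
      (hedgemem i j hj hi) e he (by rw [hH0]; exact hx₀)
  -- the ladder : left and right edges of a column give the same discrete continuation
  have hladder : ∀ j : ℕ, j < n → ∀ k : ℕ,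
      dSeq (fun k => H (uPt n j, uPt n k)) (fun k => W0 j (min k (n - 1))) e k
      = dSeq (fun k => H (uPt n (j + 1), uPt n k)) (fun k => W0 j (min k (n - 1))) e k := by
    intro j hj
    have hu12 : (uPt n j : ℝ) ≤ (uPt n (j + 1) : ℝ) := by
      rw [uPt_coe n hn hj.le, uPt_coe n hn (by omega : j + 1 ≤ n)]
      apply (div_le_div_iff_of_pos_right hnR).mpr
      push_cast
      linarith
    apply dSeq_ladder hP
    · exact fun k => (hW0 j _ hj (hminlt k)).1
    · exact fun k => hedgemem j j hj (Or.inl rfl) _ (hminlt k) _ (hbound k).1 (hbound k).2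
    · exact fun k => hedgemem (j + 1) j hj (Or.inr rfl) _ (hminlt k) _ (hbound k).1 (hbound k).2
    · exact fun k => hedgemem j j hj (Or.inl rfl) _ (hminlt k) _ (hbound' k).1 (hbound' k).2
    · exact fun k => hedgemem (j + 1) j hj (Or.inr rfl) _ (hminlt k) _ (hbound' k).1 (hbound' k).2
    · rw [uPt_zero, hH0]; exact hx₀
    · rw [uPt_zero, hH0, hH0]
    · -- joined along the horizontal segment at height `uPt n (k+1)`
      intro k
      set u1 : unitInterval := uPt n j with hu1
      set u2 : unitInterval := uPt n (j + 1) with hu2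
      have hseg : ∀ s : unitInterval, (u1 : ℝ) + (s : ℝ) * ((u2 : ℝ) - (u1 : ℝ)) ∈
          Set.Icc (0 : ℝ) 1 := by
        intro s
        constructor
        · have := mul_nonneg s.2.1 (by linarith : (0 : ℝ) ≤ (u2 : ℝ) - u1)
          have := u1.2.1
          linarith
        · have h1 : (s : ℝ) * ((u2 : ℝ) - u1) ≤ (u2 : ℝ) - u1 :=
            mul_le_of_le_one_left (by linarith) s.2.2
          have := u2.2.2
          linarith
      set seg : unitInterval → unitInterval := fun s =>
        ⟨(u1 : ℝ) + (s : ℝ) * ((u2 : ℝ) - (u1 : ℝ)), hseg s⟩ with hsegdef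
      have hsegc : Continuous seg :=
        Continuous.subtype_mk
          (continuous_const.add (continuous_subtype_val.mul continuous_const)) _
      have hseg0 : seg 0 = u1 := by
        apply Subtype.ext
        show (u1 : ℝ) + ((0 : unitInterval) : ℝ) * ((u2 : ℝ) - u1) = u1
        norm_num
      have hseg1 : seg 1 = u2 := by
        apply Subtype.ext
        show (u1 : ℝ) + ((1 : unitInterval) : ℝ) * ((u2 : ℝ) - u1) = u2
        have h1 : ((1 : unitInterval) : ℝ) = 1 := rfl
        rw [h1]
        ring
      have hseglo : ∀ s : unitInterval, (j : ℝ) / n ≤ (seg s : ℝ) := by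
        intro s
        show (j : ℝ) / n ≤ (u1 : ℝ) + (s : ℝ) * ((u2 : ℝ) - u1)
        have := mul_nonneg s.2.1 (by linarith : (0 : ℝ) ≤ (u2 : ℝ) - u1)
        have hco : (u1 : ℝ) = (j : ℝ) / n := by rw [hu1, uPt_coe n hn hj.le]
        linarith
      have hseghi : ∀ s : unitInterval, (seg s : ℝ) ≤ ((j : ℝ) + 1) / n := by
        intro s
        show (u1 : ℝ) + (s : ℝ) * ((u2 : ℝ) - u1) ≤ ((j : ℝ) + 1) / n
        have h1 : (s : ℝ) * ((u2 : ℝ) - u1) ≤ (u2 : ℝ) - u1 :=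
          mul_le_of_le_one_left (by linarith) s.2.2
        have hco : (u2 : ℝ) = ((j : ℝ) + 1) / n := by
          rw [hu2, uPt_coe n hn (by omega : j + 1 ≤ n)]
          push_cast
          ring
        linarith
      refine ⟨⟨⟨fun s => H (seg s, uPt n (k + 1)),
        hHc.comp (hsegc.prodMk continuous_const)⟩, ?_, ?_⟩, ?_⟩
      · show H (seg 0, uPt n (k + 1)) = H (u1, uPt n (k + 1))
        rw [hseg0]
      · show H (seg 1, uPt n (k + 1)) = H (u2, uPt n (k + 1))
        rw [hseg1]
      · intro s
        constructor
        · exact (hW0 j _ hj (hminlt (k + 1))).2 (seg s) (uPt n (k + 1)) (hseglo s) (hseghi s)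
            (hbound (k + 1)).1 (hbound (k + 1)).2
        · exact (hW0 j _ hj (hminlt k)).2 (seg s) (uPt n (k + 1)) (hseglo s) (hseghi s)
            (hbound' k).1 (hbound' k).2
  -- main induction over the columns
  have hclaim : ∀ j : ℕ, j < n → geq P x₁ (g 1)
      (dSeq (fun k => H (uPt n j, uPt n k)) (fun k => W0 j (min k (n - 1))) e (n - 1)) := by
    intro j
    induction j with
    | zero =>
      intro h0n
      obtain ⟨gc, hgc, hgi, hgf⟩ := hcol 0 0 h0n (Or.inl rfl)
      have hfun : (fun t : unitInterval => H (uPt n 0, t))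
          = (fun t : unitInterval => H (0, t)) := by
        funext t
        rw [uPt_zero]
      rw [hfun] at hgc
      have hgi' : geq P x₀ (gc 0) e := geq_pt_congr hgi (by rw [uPt_zero]; exact hH0 0)
      have hini : geq P (H ((0 : unitInterval), 0)) (g 0) (gc 0) :=
        geq_pt_congr (geq_trans h0 (geq_symm hgi')) (hH0 0).symm
      have hcu := coherent_unique hP (hHc.comp (continuous_const.prodMk continuous_id))
        hg hgc hini 1
      have hcu' : geq P x₁ (g 1) (gc 1) := geq_pt_congr hcu (hH1 0)
      rw [hgf] at hcu'
      exact hcu'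
    | succ j ih =>
      intro hjn
      have hj : j < n := by omega
      have hprev := ih hj
      rw [hladder j hj (n - 1)] at hprev
      obtain ⟨gR, hgRc, hgRi, hgRf⟩ := hcol (j + 1) j hj (Or.inr rfl)
      obtain ⟨gL, hgLc, hgLi, hgLf⟩ := hcol (j + 1) (j + 1) hjn (Or.inl rfl)
      have hcu := coherent_unique hP (hγc (j + 1)) hgRc hgLc
        (geq_trans hgRi (geq_symm hgLi)) 1
      have hx1 : geq P x₁ (gR 1) (gL 1) := geq_pt_congr hcu (hH1 _)
      rw [hgRf, hgLf] at hx1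
      exact geq_trans hprev hx1
  -- conclusion: identify the right edge of the last column with `g'`
  have hmain := hclaim (n - 1) hsub
  rw [hladder (n - 1) hsub (n - 1)] at hmain
  obtain ⟨gR, hgRc, hgRi, hgRf⟩ := hcol ((n - 1) + 1) (n - 1) hsub (Or.inr rfl)
  have huend : uPt n ((n - 1) + 1) = 1 := by
    rw [show (n - 1) + 1 = n from by omega]
    exact uPt_last n le_rfl hn
  have hfun : (fun t : unitInterval => H (uPt n ((n - 1) + 1), t))
      = (fun t : unitInterval => H (1, t)) := by
    funext t
    rw [huend]
  rw [hfun] at hgRc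
  have hgRi' : geq P x₀ (gR 0) e := geq_pt_congr hgRi (by rw [huend]; exact hH0 1)
  have hini : geq P (H ((1 : unitInterval), 0)) (gR 0) (g' 0) :=
    geq_pt_congr (geq_trans hgRi' (geq_symm h0')) (hH0 1).symm
  have hcu := coherent_unique hP (hHc.comp (continuous_const.prodMk continuous_id))
    hgRc hg' hini 1
  have hcu' : geq P x₁ (gR 1) (g' 1) := geq_pt_congr hcu (hH1 1)
  rw [hgRf] at hcu'
  exact geq_trans hmain hcu'

end Continuation


/-- Joint injectivity of restrictions to a cover. -/
lemma cover_inj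
    (hloc_inj : ∀ (ι : Type u) (Ui : ι → Opens X),
      Function.Injective (fun f : P.sec (iSup Ui) => fun i => P.res (le_iSup Ui i) f))
    (T : Opens X) (ι : Type u) (Ui : ι → Opens X) (hle : ∀ i, Ui i ≤ T) (hcov : T ≤ iSup Ui)
    {a b : P.sec T} (h : ∀ i, P.res (hle i) a = P.res (hle i) b) : a = b := by
  have hT : iSup Ui = T := le_antisymm (iSup_le hle) hcov
  subst hT
  exact hloc_inj ι Ui (funext fun i => h i)

end PresheafGlob

/-- globalization principle. Let `X` be a Hausdorff, locally path-connected,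
connected and simply connected topological space and `𝔓` a presheaf of sets over `X` having:
(i) the localization property (the sheaf condition: restrictions to a cover are jointly injective
and every compatible family glues); (ii) the uniqueness property (restriction from a connected
open set to a nonempty open subset is injective); (iii) the extension property (`X` is covered by
open sets `U` such that restriction from `U` to any connected nonempty open `V ⊆ U` is
surjective).  Then every section over a connected nonempty open set `V ⊆ X` extends uniquely to
a global section. -/
theorem presheaf_globalization
    {X : Type u} [TopologicalSpace X]
    [T2Space X] [LocallyPathConnectedSpace X] [ConnectedSpace X] [SimplyConnectedSpace X]
    (P : PresheafOfSets.{u, v} X)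
    -- localization property
    (hloc_inj : ∀ (ι : Type u) (Ui : ι → Opens X),
      Function.Injective (fun f : P.sec (iSup Ui) => fun i => P.res (le_iSup Ui i) f))
    (hloc_glue : ∀ (ι : Type u) (Ui : ι → Opens X) (fi : ∀ i, P.sec (Ui i)),
      (∀ i j, P.res (inf_le_left : Ui i ⊓ Ui j ≤ Ui i) (fi i)
            = P.res (inf_le_right : Ui i ⊓ Ui j ≤ Ui j) (fi j)) →
      ∃ f : P.sec (iSup Ui), ∀ i, P.res (le_iSup Ui i) f = fi i)
    -- uniqueness property
    (huniq : ∀ (U V : Opens X), IsPreconnected (U : Set X) → (V : Set X).Nonempty →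
      ∀ hVU : V ≤ U, Function.Injective (P.res hVU))
    -- extension property
    (hext : ∀ x : X, ∃ U : Opens X, x ∈ U ∧
      ∀ V : Opens X, ∀ hVU : V ≤ U, IsPreconnected (V : Set X) → (V : Set X).Nonempty →
        Function.Surjective (P.res hVU))
    (V : Opens X) (hVconn : IsPreconnected (V : Set X)) (hVne : (V : Set X).Nonempty)
    (f : P.sec V) :
    ∃! fbar : P.sec ⊤, P.res le_top fbar = f := by
  classical
  have hP : PresheafGlob.Hyp P := ⟨huniq, hext⟩
  obtain ⟨x₀, hx₀V⟩ := id hVne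
  obtain ⟨W₀, hW₀g, hx₀W₀, hW₀V⟩ := PresheafGlob.exists_good hP x₀ V hx₀V
  set e₀ : PresheafGlob.Sec P := ⟨W₀, P.res hW₀V f⟩ with he₀
  have he₀g : PresheafGlob.Good P e₀.1 := hW₀g
  have hx₀e₀ : x₀ ∈ e₀.1 := hx₀W₀
  set p : ∀ x : X, Path x₀ x := fun x => (PathConnectedSpace.joined x₀ x).somePath with hp
  have hsec : ∀ x : X, ∃ gx : unitInterval → PresheafGlob.Sec P,
      PresheafGlob.Coherent P (fun t => (p x) t) gx ∧
      PresheafGlob.geq P ((p x) 0) (gx 0) e₀ := by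
    intro x
    exact PresheafGlob.coherent_exists hP (p x).continuous e₀ he₀g
      (by rw [Path.source]; exact hx₀e₀)
  choose gx hgxc hgxi using hsec
  set G : X → PresheafGlob.Sec P := fun x => gx x 1 with hG
  have hGgood : ∀ x, PresheafGlob.Good P (G x).1 := fun x => (hgxc x 1).1
  have hGmem : ∀ x, x ∈ (G x).1 := by
    intro x
    have h1 : (p x) 1 ∈ (gx x 1).1 := (hgxc x 1).2.1
    rwa [(p x).target] at h1
  -- compatibility of the chosen sections
  have hcompat : ∀ x y : X, ∀ z, z ∈ ((G x).1 ⊓ (G y).1 : Opens X) →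
      PresheafGlob.geq P z (G x) (G y) := by
    intro x y z hz
    have hpcx : IsPathConnected (((G x).1 : Opens X) : Set X) :=
      ((G x).1.isOpen.isConnected_iff_isPathConnected).mp (And.intro (hGgood x).2.1 (hGgood x).1)
    have hpcy : IsPathConnected (((G y).1 : Opens X) : Set X) :=
      ((G y).1.isOpen.isConnected_iff_isPathConnected).mp (And.intro (hGgood y).2.1 (hGgood y).1)
    have hjx : JoinedIn (((G x).1 : Opens X) : Set X) x z := hpcx.joinedIn x (hGmem x) z hz.1
    have hjy : JoinedIn (((G y).1 : Opens X) : Set X) y z := hpcy.joinedIn y (hGmem y) z hz.2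
    obtain ⟨qx, hqx⟩ := hjx
    obtain ⟨qy, hqy⟩ := hjy
    have hcx := PresheafGlob.coherent_trans (p x) qx (hgxc x) (fun s => hqx s)
    have hcy := PresheafGlob.coherent_trans (p y) qy (hgxc y) (fun s => hqy s)
    obtain ⟨h⟩ := SimplyConnectedSpace.paths_homotopic ((p x).trans qx) ((p y).trans qy)
    have hfun0 : (fun t : unitInterval => h (0, t)) = (fun t => ((p x).trans qx) t) :=
      funext fun t => h.apply_zero t
    have hfun1 : (fun t : unitInterval => h (1, t)) = (fun t => ((p y).trans qy) t) :=
      funext fun t => h.apply_one t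
    rw [← hfun0] at hcx
    rw [← hfun1] at hcy
    have hi0 : PresheafGlob.geq P x₀ ((fun t => gx x (PresheafGlob.stretch t)) 0) e₀ := by
      show PresheafGlob.geq P x₀ (gx x (PresheafGlob.stretch 0)) e₀
      rw [PresheafGlob.stretch_zero]
      exact PresheafGlob.geq_pt_congr (hgxi x) (p x).source
    have hi0' : PresheafGlob.geq P x₀ ((fun t => gx y (PresheafGlob.stretch t)) 0) e₀ := by
      show PresheafGlob.geq P x₀ (gx y (PresheafGlob.stretch 0)) e₀
      rw [PresheafGlob.stretch_zero]
      exact PresheafGlob.geq_pt_congr (hgxi y) (p y).source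
    have happ := PresheafGlob.final_homotopy hP
      (H := fun st : unitInterval × unitInterval => h st) h.continuous
      (fun s => h.source s) (fun s => h.target s) he₀g hx₀e₀ hcx hcy hi0 hi0'
    have happ' : PresheafGlob.geq P z (gx x (PresheafGlob.stretch 1))
        (gx y (PresheafGlob.stretch 1)) := happ
    rwa [PresheafGlob.stretch_one] at happ'
  -- the compatible family of sections
  have hres : ∀ x y : X,
      P.res (inf_le_left : (G x).1 ⊓ (G y).1 ≤ (G x).1) (G x).2
      = P.res (inf_le_right : (G x).1 ⊓ (G y).1 ≤ (G y).1) (G y).2 := by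
    intro x y
    refine PresheafGlob.cover_inj hloc_inj ((G x).1 ⊓ (G y).1)
      {w : X // w ∈ ((G x).1 ⊓ (G y).1 : Opens X)}
      (fun z => PresheafGlob.pcomp z.1 ((G x).1 ⊓ (G y).1))
      (fun z => PresheafGlob.pcomp_le) ?_ ?_
    · intro w hw
      exact Opens.mem_iSup.mpr ⟨⟨w, hw⟩, PresheafGlob.mem_pcomp hw⟩
    · intro z
      rw [P.res_res, P.res_res]
      exact PresheafGlob.geq_res_eq hP (hcompat x y z.1 z.2) z.2.1 z.2.2
  obtain ⟨F₀, hF₀⟩ := hloc_glue X (fun x => (G x).1) (fun x => (G x).2) hres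
  have hcovtop : (⊤ : Opens X) ≤ iSup (fun x => (G x).1) := fun w _ =>
    Opens.mem_iSup.mpr ⟨w, hGmem w⟩
  set F : P.sec ⊤ := P.res hcovtop F₀ with hF
  have hFx : ∀ x : X, P.res (le_top : (G x).1 ≤ ⊤) F = (G x).2 := by
    intro x
    rw [hF, P.res_res]
    exact hF₀ x
  -- the germ of the global section at the base point is that of `f`
  have hloop : PresheafGlob.geq P x₀ (G x₀) e₀ := by
    obtain ⟨h⟩ := SimplyConnectedSpace.paths_homotopic (p x₀) (Path.refl x₀)
    have hrefl : PresheafGlob.Coherent P (fun t => (Path.refl x₀) t) (fun _ => e₀) :=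
      PresheafGlob.coherent_const he₀g (fun t => by rw [Path.refl_apply]; exact hx₀e₀)
    have hfun0 : (fun t : unitInterval => h (0, t)) = (fun t => (p x₀) t) :=
      funext fun t => h.apply_zero t
    have hfun1 : (fun t : unitInterval => h (1, t)) = (fun t => (Path.refl x₀) t) :=
      funext fun t => h.apply_one t
    have hcx := hgxc x₀
    rw [← hfun0] at hcx
    rw [← hfun1] at hrefl
    have hi0 : PresheafGlob.geq P x₀ (gx x₀ 0) e₀ :=
      PresheafGlob.geq_pt_congr (hgxi x₀) (p x₀).source
    have hi0' : PresheafGlob.geq P x₀ ((fun _ : unitInterval => e₀) 0) e₀ :=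
      PresheafGlob.geq_refl hx₀e₀
    exact PresheafGlob.final_homotopy hP
      (H := fun st : unitInterval × unitInterval => h st) h.continuous
      (fun s => h.source s) (fun s => h.target s) he₀g hx₀e₀ hcx hrefl hi0 hi0'
  -- conclusion
  have hFf : P.res le_top F = f := by
    obtain ⟨W', hx₀W', hW1, hW2, hresW⟩ := hloop
    have hW'V : W' ≤ V := hW2.trans hW₀V
    apply huniq V W' hVconn ⟨x₀, hx₀W'⟩ hW'V
    rw [P.res_res]
    calc P.res (hW'V.trans le_top) F
        = P.res hW1 (P.res (le_top : (G x₀).1 ≤ ⊤) F) := (P.res_res _ _ _).symm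
      _ = P.res hW1 (G x₀).2 := by rw [hFx x₀]
      _ = P.res hW2 e₀.2 := hresW
      _ = P.res hW2 (P.res hW₀V f) := rfl
      _ = P.res hW'V f := P.res_res _ _ _
  refine ⟨F, hFf, ?_⟩
  intro b hb
  apply huniq ⊤ V (by rw [Opens.coe_top]; exact isPreconnected_univ) hVne le_top
  rw [hb, hFf]
end

section
/- Let S and X be topological spaces, π : S → X a continuous local homeomorphism, and assume S is Hausdorff. Let U ⊆ X be a connected open subset that is quasi-fundamental for π, i.e., for every x ∈ U and every s ∈ S with π(s) = x there exists a continuous map σ : U → S with π ∘ σ equal to the inclusion of U into X and σ(x) = s. Then U is fundamental for π: π⁻¹(U) is the union of a family of pairwise disjoint open subsets of S, each of which is mapped homeomorphically onto U by π. -/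
universe u v

section Aux

variable {S : Type u} {X : Type v} [TopologicalSpace S] [TopologicalSpace X]

lemma aux_image_open (π : S → X) (hπ : IsLocalHomeomorph π) {U : Set X} (hUopen : IsOpen U)
    {σ : X → S} (hσc : ContinuousOn σ U) (hσs : ∀ y ∈ U, π (σ y) = y) :
    IsOpen (σ '' U) := by
  rw [isOpen_iff_forall_mem_open]
  rintro s ⟨x, hx, rfl⟩
  obtain ⟨e, hse, he⟩ := hπ (σ x)
  set A : Set X := U ∩ σ ⁻¹' e.source with hA
  have hAopen : IsOpen A := hσc.isOpen_inter_preimage hUopen e.open_source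
  refine ⟨e.source ∩ π ⁻¹' A, ?_, e.open_source.inter (hAopen.preimage hπ.continuous), ?_, ?_⟩
  · rintro t ⟨ht, htA⟩
    have h1 : σ (π t) ∈ e.source := htA.2
    have h2 : σ (π t) = t := by
      apply e.injOn h1 ht
      rw [← he]
      exact hσs _ htA.1
    exact ⟨π t, htA.1, h2⟩
  · exact hse
  · rw [Set.mem_preimage, hσs x hx]
    exact ⟨hx, hse⟩

lemma aux_eq_or_disjoint [T2Space S] (π : S → X) (hπ : IsLocalHomeomorph π)
    {U : Set X} (hUconn : IsConnected U)
    {σ τ : X → S} (hσc : ContinuousOn σ U) (hσs : ∀ y ∈ U, π (σ y) = y)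
    (hτc : ContinuousOn τ U) (hτs : ∀ y ∈ U, π (τ y) = y) :
    σ '' U = τ '' U ∨ Disjoint (σ '' U) (τ '' U) := by
  have hconn : ConnectedSpace U := Subtype.connectedSpace hUconn
  set P : Set U := {y | σ y.1 = τ y.1} with hP
  have hPc : IsClosed P := isClosed_eq hσc.restrict hτc.restrict
  have hPo : IsOpen P := by
    rw [isOpen_iff_forall_mem_open]
    intro y hy
    have hy' : σ y.1 = τ y.1 := hy
    obtain ⟨e, hse, he⟩ := hπ (σ y.1)
    refine ⟨(U.restrict σ) ⁻¹' e.source ∩ (U.restrict τ) ⁻¹' e.source, ?_,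
      (e.open_source.preimage hσc.restrict).inter (e.open_source.preimage hτc.restrict),
      ⟨hse, by show τ y.1 ∈ e.source; rw [← hy']; exact hse⟩⟩
    rintro z ⟨hz1, hz2⟩
    show σ z.1 = τ z.1
    apply e.injOn hz1 hz2
    rw [← he]
    show π (σ z.1) = π (τ z.1)
    rw [hσs _ z.2, hτs _ z.2]
  rcases isClopen_iff.mp ⟨hPc, hPo⟩ with h | h
  · right
    rw [Set.disjoint_left]
    rintro t ⟨y, hy, rfl⟩ ⟨y', hy', hyy'⟩
    have hyeq : y = y' := by rw [← hσs y hy, ← hτs y' hy', hyy']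
    subst hyeq
    have : (⟨y, hy⟩ : U) ∈ P := hyy'.symm
    rw [h] at this
    exact this
  · left
    apply Set.image_congr
    intro y hy
    have : (⟨y, hy⟩ : U) ∈ P := h ▸ Set.mem_univ _
    exact this

end Aux

/-- Let `π : S → X` be a continuous local homeomorphism with `S` Hausdorff, and
let `U ⊆ X` be a connected open subset which is quasi-fundamental for `π`: for every `x ∈ U` and
every `s ∈ π⁻¹(x)` there is a continuous local section `σ : U → S` of `π` with `σ x = s`.
Then `U` is fundamental for `π`: `π⁻¹(U)` is the union of a family of pairwise disjoint open
subsets of `S`, each of which is mapped homeomorphically onto `U` by `π`. -/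
theorem quasiFundamental_isFundamental
    {S : Type u} {X : Type v} [TopologicalSpace S] [TopologicalSpace X] [T2Space S]
    (π : S → X) (hπ : IsLocalHomeomorph π)
    (U : Set X) (hUopen : IsOpen U) (hUconn : IsConnected U)
    (hquasi : ∀ x ∈ U, ∀ s : S, π s = x →
      ∃ σ : X → S, ContinuousOn σ U ∧ (∀ y ∈ U, π (σ y) = y) ∧ σ x = s) :
    ∃ (ι : Type u) (V : ι → Set S), (∀ i, IsOpen (V i)) ∧
      Pairwise (Function.onFun Disjoint V) ∧ π ⁻¹' U = ⋃ i, V i ∧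
      ∀ i, ∃ e : V i ≃ₜ U, ∀ s : V i, (e s : X) = π (s : S) := by
  classical
  refine ⟨{V : Set S // ∃ σ : X → S, ContinuousOn σ U ∧ (∀ y ∈ U, π (σ y) = y) ∧ V = σ '' U},
    fun i => i.1, ?_, ?_, ?_, ?_⟩
  · rintro ⟨V, σ, hσc, hσs, rfl⟩
    exact aux_image_open π hπ hUopen hσc hσs
  · rintro ⟨V, σ, hσc, hσs, rfl⟩ ⟨W, τ, hτc, hτs, rfl⟩ hne
    rcases aux_eq_or_disjoint π hπ hUconn hσc hσs hτc hτs with h | h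
    · exact absurd (Subtype.ext h) hne
    · exact h
  · ext s
    simp only [Set.mem_preimage, Set.mem_iUnion]
    constructor
    · intro hs
      obtain ⟨σ, hσc, hσs, hσx⟩ := hquasi (π s) hs s rfl
      exact ⟨⟨σ '' U, σ, hσc, hσs, rfl⟩, ⟨π s, hs, hσx⟩⟩
    · rintro ⟨⟨V, σ, hσc, hσs, rfl⟩, y, hy, rfl⟩
      rw [hσs y hy]
      exact hy
  · rintro ⟨V, σ, hσc, hσs, rfl⟩
    have hmem : ∀ s : (σ '' U : Set S), π s.1 ∈ U := by
      rintro ⟨s, y, hy, rfl⟩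
      rw [hσs y hy]
      exact hy
    refine ⟨⟨⟨fun s => ⟨π s.1, hmem s⟩, fun x => ⟨σ x.1, Set.mem_image_of_mem σ x.2⟩,
      ?_, ?_⟩, ?_, ?_⟩, fun s => rfl⟩
    · rintro ⟨s, y, hy, rfl⟩
      apply Subtype.ext
      show σ (π (σ y)) = σ y
      rw [hσs y hy]
    · rintro ⟨x, hx⟩
      apply Subtype.ext
      exact hσs x hx
    · exact Continuous.subtype_mk (hπ.continuous.comp continuous_subtype_val) _
    · exact Continuous.subtype_mk hσc.restrict _
end
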